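/- arXiv:1705.10306 — 6 statements merged into one kernel-verified Lean document; each statement's English description precedes it below -/
import Mathlib

section
/- Fix an integer K ≥ 1. Let p(·, y) : X → [0, ∞) be a measurable joint density with marginal likelihood p(y) = ∫ p(x, y) dμ(x) ∈ (0, ∞) and posterior density p(x|y) = p(x, y)/p(y), and let q(·|y) be a proposal probability density on X with q(x|y) > 0 whenever p(x, y) > 0. Assume x^{1:K} ↦ Q_IS(x^{1:K}) log Ẑ_IS(x^{1:K}) is μ^{⊗K}-integrable. Then ELBO_IS(y) := ∫_{X^K} Q_IS(x^{1:K}) log Ẑ_IS(x^{1:K}) dμ^{⊗K}(x^{1:K}) satisfies ELBO_IS(y) = log p(y) − KL(Q_IS‖P_IS), where P_IS(x^{1:K}) = (1/K) Σ_{k=1}^K p(x^k|y) ∏_{ℓ≠k} q(x^ℓ|y). -/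
open MeasureTheory Finset

/-- **KL decomposition of the IWAE ELBO.**
Fix `K ≥ 1`.  Let `p = p(·, y)` be a measurable joint density with marginal likelihood
`py ∈ (0, ∞)` and posterior `p(x|y) = p x / py`, and `q = q(·|y)` a proposal probability
density with `q x > 0` whenever `p x > 0`.  Assume `Q_IS · log Ẑ_IS` is
`μ^{⊗K}`-integrable (in particular, as this implies, `Ẑ_IS` is a.e. positive where `Q_IS`
is).  Then `ELBO_IS(y) = ∫ Q_IS log Ẑ_IS dμ^{⊗K} = log py - KL(Q_IS ‖ P_IS)`, where
`P_IS(x^{1:K}) = (1/K) ∑ₖ p(xᵏ|y) ∏_{ℓ≠k} q(xˡ|y)`. -/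
theorem elbo_is_eq_log_marginal_likelihood_sub_KL
    {X : Type*} [MeasurableSpace X] (μ : Measure X) [SigmaFinite μ]
    (K : ℕ) (hK : 1 ≤ K)
    (p q : X → ℝ) (py : ℝ)
    (hp_meas : Measurable p) (hp_nonneg : ∀ x, 0 ≤ p x)
    (hp_int : Integrable p μ)
    (hpy_def : ∫ x, p x ∂μ = py) (hpy_pos : 0 < py)
    (hq_meas : Measurable q) (hq_nonneg : ∀ x, 0 ≤ q x)
    (hq_norm : ∫ x, q x ∂μ = 1)
    (habs : ∀ x, 0 < p x → 0 < q x)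
    (hint : Integrable
      (fun v : Fin K → X =>
        (∏ k : Fin K, q (v k)) * Real.log ((K : ℝ)⁻¹ * ∑ k : Fin K, p (v k) / q (v k)))
      (Measure.pi fun _ : Fin K => μ))
    (hsupp : ∀ᵐ v ∂(Measure.pi fun _ : Fin K => μ),
      0 < ∏ k : Fin K, q (v k) → 0 < (K : ℝ)⁻¹ * ∑ k : Fin K, p (v k) / q (v k)) :
    ∫ v : Fin K → X,
        (∏ k : Fin K, q (v k)) * Real.log ((K : ℝ)⁻¹ * ∑ k : Fin K, p (v k) / q (v k))
        ∂(Measure.pi fun _ : Fin K => μ)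
      = Real.log py
        - ∫ v : Fin K → X,
            (∏ k : Fin K, q (v k)) *
              Real.log ((∏ k : Fin K, q (v k)) /
                ((K : ℝ)⁻¹ * ∑ k : Fin K, (p (v k) / py) * ∏ l ∈ Finset.univ \ {k}, q (v l)))
            ∂(Measure.pi fun _ : Fin K => μ) := by
  letI : MeasureSpace X := ⟨μ⟩
  have hvol : (Measure.pi fun _ : Fin K => μ) = (volume : Measure (Fin K → X)) := by
    rw [volume_pi]; rfl
  have hKpos : (0 : ℝ) < (K : ℝ) := by exact_mod_cast hK
  have hq_int : Integrable q μ := by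
    by_contra h
    rw [integral_undef h] at hq_norm; norm_num at hq_norm
  -- integrability of Q
  have hQint : Integrable (fun v : Fin K → X => ∏ k : Fin K, q (v k))
      (Measure.pi fun _ : Fin K => μ) := by
    rw [hvol]
    exact Integrable.fintype_prod (f := fun _ : Fin K => q) (fun _ => hq_int)
  have hQone : ∫ v, (∏ k : Fin K, q (v k)) ∂(Measure.pi fun _ : Fin K => μ) = 1 := by
    rw [hvol]
    rw [volume_pi, MeasureTheory.integral_fintype_prod_eq_prod (ι := Fin K) (fun _ => q)]
    have h1 : ∫ x, q x = 1 := hq_norm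
    simp [h1]
  -- pointwise identity a.e.
  have hae : ∀ᵐ v ∂(Measure.pi fun _ : Fin K => μ),
      (∏ k : Fin K, q (v k)) *
          Real.log ((∏ k : Fin K, q (v k)) /
            ((K : ℝ)⁻¹ * ∑ k : Fin K, (p (v k) / py) * ∏ l ∈ Finset.univ \ {k}, q (v l)))
        = Real.log py * (∏ k : Fin K, q (v k))
          - (∏ k : Fin K, q (v k)) *
              Real.log ((K : ℝ)⁻¹ * ∑ k : Fin K, p (v k) / q (v k)) := by
    filter_upwards [hsupp] with v hZ
    have hQnn : 0 ≤ ∏ k : Fin K, q (v k) := Finset.prod_nonneg fun k _ => hq_nonneg _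
    rcases hQnn.eq_or_lt with h0 | hQpos
    · simp [← h0]
    · have hqk : ∀ k : Fin K, 0 < q (v k) := by
        intro k
        rcases (hq_nonneg (v k)).eq_or_lt with h | h
        · exact absurd (Finset.prod_eq_zero (mem_univ k) h.symm) hQpos.ne'
        · exact h
      have hZpos := hZ hQpos
      have hSpos : 0 < ∑ k : Fin K, p (v k) / q (v k) := by
        have h1 : (∑ k : Fin K, p (v k) / q (v k))
            = (K : ℝ) * ((K : ℝ)⁻¹ * ∑ k : Fin K, p (v k) / q (v k)) := by
          field_simp
        rw [h1]; positivity
      have hsum : ∑ k : Fin K, (p (v k) / py) * ∏ l ∈ Finset.univ \ {k}, q (v l)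
          = py⁻¹ * ((∏ k : Fin K, q (v k)) * ∑ k : Fin K, p (v k) / q (v k)) := by
        rw [Finset.mul_sum, Finset.mul_sum]
        refine Finset.sum_congr rfl fun k _ => ?_
        have hprod : q (v k) * ∏ l ∈ Finset.univ \ {k}, q (v l) = ∏ l : Fin K, q (v l) := by
          rw [Finset.sdiff_singleton_eq_erase]
          exact Finset.mul_prod_erase univ (fun l => q (v l)) (mem_univ k)
        rw [← hprod]
        have h1 := (hqk k).ne'
        have h2 := hpy_pos.ne'
        field_simp
      have hdiv : (∏ k : Fin K, q (v k)) /
            ((K : ℝ)⁻¹ * ∑ k : Fin K, (p (v k) / py) * ∏ l ∈ Finset.univ \ {k}, q (v l))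
          = py / ((K : ℝ)⁻¹ * ∑ k : Fin K, p (v k) / q (v k)) := by
        rw [hsum]
        rw [div_eq_div_iff (by positivity) (by positivity)]
        have h2 : py ≠ 0 := hpy_pos.ne'
        field_simp
      rw [hdiv, Real.log_div hpy_pos.ne' hZpos.ne']
      ring
  have hQlog : Integrable (fun v : Fin K → X => Real.log py * (∏ k : Fin K, q (v k)))
      (Measure.pi fun _ : Fin K => μ) := hQint.const_mul _
  have hKL : ∫ v, ((∏ k : Fin K, q (v k)) *
          Real.log ((∏ k : Fin K, q (v k)) /
            ((K : ℝ)⁻¹ * ∑ k : Fin K, (p (v k) / py) * ∏ l ∈ Finset.univ \ {k}, q (v l))))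
          ∂(Measure.pi fun _ : Fin K => μ)
      = Real.log py
        - ∫ v, ((∏ k : Fin K, q (v k)) *
            Real.log ((K : ℝ)⁻¹ * ∑ k : Fin K, p (v k) / q (v k)))
            ∂(Measure.pi fun _ : Fin K => μ) := by
    rw [integral_congr_ae hae, integral_sub hQlog hint, integral_const_mul, hQone, mul_one]
  rw [hKL]
  ring
end

section
/- (Proposition 3.) Fix an integer K ≥ 1. Let p(·|y) and q(·|y) be probability densities on X with respect to μ. Define Q_IS(x^{1:K}) = ∏_{k=1}^K q(x^k|y) and P_IS(x^{1:K}) = (1/K) Σ_{k=1}^K p(x^k|y) ∏_{ℓ≠k} q(x^ℓ|y). Then Q_IS(x^{1:K}) = P_IS(x^{1:K}) for all x^{1:K} ∈ X^K if and only if q(x|y) = p(x|y) for all x ∈ X. -/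
open MeasureTheory Finset

/-- **Proposition 3.**
Fix `K ≥ 1` and probability densities `p = p(·|y)` and `q = q(·|y)` on `X` w.r.t. `μ`.
With `Q_IS(x^{1:K}) = ∏ₖ q(xᵏ|y)` and
`P_IS(x^{1:K}) = (1/K) ∑ₖ p(xᵏ|y) ∏_{ℓ≠k} q(xˡ|y)`, we have `Q_IS = P_IS` everywhere on
`X^K` if and only if `q = p` everywhere on `X`. -/
theorem q_is_eq_p_is_iff_proposal_eq_posterior
    {X : Type*} [MeasurableSpace X] (μ : Measure X) [SigmaFinite μ]
    (K : ℕ) (hK : 1 ≤ K)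
    (p q : X → ℝ)
    (hp_meas : Measurable p) (hp_nonneg : ∀ x, 0 ≤ p x)
    (hp_norm : ∫ x, p x ∂μ = 1)
    (hq_meas : Measurable q) (hq_nonneg : ∀ x, 0 ≤ q x)
    (hq_norm : ∫ x, q x ∂μ = 1) :
    (∀ v : Fin K → X,
        ∏ k : Fin K, q (v k)
          = (K : ℝ)⁻¹ * ∑ k : Fin K, p (v k) * ∏ l ∈ Finset.univ \ {k}, q (v l))
      ↔ ∀ x, q x = p x := by
  have hKne : (K : ℝ) ≠ 0 := Nat.cast_ne_zero.mpr (by omega)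
  constructor
  · intro h x
    -- there is a point where q is nonzero
    have hx0 : ∃ x₀, q x₀ ≠ 0 := by
      by_contra hcon
      push_neg at hcon
      rw [show (fun x => q x) = fun _ => (0:ℝ) from funext hcon] at hq_norm
      simp at hq_norm
    obtain ⟨x₀, hq0⟩ := hx0
    have hcard : ∀ k : Fin K, (univ \ {k} : Finset (Fin K)).card = K - 1 := by
      intro k
      rw [sdiff_singleton_eq_erase, card_erase_of_mem (mem_univ k), card_univ,
        Fintype.card_fin]
    have hpow : q x₀ ^ (K - 1) ≠ 0 := pow_ne_zero _ hq0
    -- Step 1 : p x₀ = q x₀, from the constant vector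
    have h1 := h (fun _ => x₀)
    simp only [prod_const, sum_const, hcard, card_univ, Fintype.card_fin,
      nsmul_eq_mul] at h1
    have hqK : q x₀ ^ K = q x₀ * q x₀ ^ (K - 1) := by
      rw [← pow_succ']
      congr 1
      omega
    rw [hqK, ← mul_assoc, inv_mul_cancel₀ hKne, one_mul] at h1
    have hp0 : p x₀ = q x₀ := (mul_right_cancel₀ hpow h1).symm
    -- Step 2 : the vector with one coordinate x and the rest x₀
    rcases eq_or_lt_of_le hK with hK1 | hK2
    · -- K = 1
      subst hK1
      have h2 := h (fun _ => x)
      simpa using h2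
    · -- K ≥ 2
      set i : Fin K := ⟨0, by omega⟩ with hi
      set g : Fin K → X := fun k => if k = i then x else x₀ with hg
      have hgi : g i = x := by simp [hg]
      have hgne : ∀ k : Fin K, k ≠ i → g k = x₀ := by
        intro k hk; simp [hg, hk]
      have h2 := h g
      -- LHS
      have hprod : (∏ k : Fin K, q (g k)) = q x * q x₀ ^ (K - 1) := by
        have hcongr : ∀ l ∈ univ.erase i, q (g l) = q x₀ := fun l hl => by
          rw [hgne l (Finset.ne_of_mem_erase hl)]
        rw [← Finset.mul_prod_erase univ (fun k => q (g k)) (mem_univ i),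
          Finset.prod_congr rfl hcongr, prod_const,
          card_erase_of_mem (mem_univ i), card_univ, Fintype.card_fin, hgi]
      -- the summand at i
      have hterm_i : p (g i) * ∏ l ∈ univ \ {i}, q (g l) = p x * q x₀ ^ (K - 1) := by
        have hcongr : ∀ l ∈ univ \ {i}, q (g l) = q x₀ := fun l hl => by
          rw [hgne l (by simpa using (Finset.mem_sdiff.mp hl).2)]
        rw [Finset.prod_congr rfl hcongr, prod_const, hcard, hgi]
      have hq2 : q x₀ * q x₀ ^ (K - 2) = q x₀ ^ (K - 1) := by
        rw [← pow_succ']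
        congr 1
        omega
      -- the summands away from i
      have hterm : ∀ k ∈ univ.erase i,
          p (g k) * ∏ l ∈ univ \ {k}, q (g l)
            = q x * q x₀ ^ (K - 1) := by
        intro k hk
        have hki : k ≠ i := Finset.ne_of_mem_erase hk
        have hik : i ∈ (univ \ {k} : Finset (Fin K)) := by
          simp [Finset.mem_sdiff, hki.symm]
        have hcongr : ∀ l ∈ (univ \ {k} : Finset (Fin K)).erase i, q (g l) = q x₀ :=
          fun l hl => by rw [hgne l (Finset.ne_of_mem_erase hl)]
        rw [hgne k hki, hp0,
          ← Finset.mul_prod_erase _ (fun l => q (g l)) hik,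
          Finset.prod_congr rfl hcongr, prod_const, hgi,
          card_erase_of_mem hik, hcard,
          show K - 1 - 1 = K - 2 from by omega, ← hq2]
        ring
      -- assemble the sum
      have hsum : (∑ k : Fin K, p (g k) * ∏ l ∈ univ \ {k}, q (g l))
          = p x * q x₀ ^ (K - 1) + ((K : ℝ) - 1) * (q x * q x₀ ^ (K - 1)) := by
        rw [← Finset.add_sum_erase univ _ (mem_univ i), hterm_i,
          Finset.sum_congr rfl hterm, sum_const,
          card_erase_of_mem (mem_univ i), card_univ, Fintype.card_fin,
          nsmul_eq_mul]
        congr 2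
        push_cast [Nat.cast_sub (by omega : 1 ≤ K)]
        ring
      rw [hprod, hsum] at h2
      -- conclude by algebra
      have h4 : q x * q x₀ ^ (K - 1) = p x * q x₀ ^ (K - 1) := by
        field_simp at h2
        ring_nf at h2 ⊢
        have hx : q x = p x := by linarith
        rw [hx]
      exact mul_right_cancel₀ hpow h4
  · intro hqp v
    have hterm : ∀ k : Fin K,
        p (v k) * ∏ l ∈ univ \ {k}, q (v l) = ∏ l, q (v l) := by
      intro k
      rw [← hqp (v k), sdiff_singleton_eq_erase,
        Finset.mul_prod_erase univ (fun l => q (v l)) (mem_univ k)]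
    rw [Finset.sum_congr rfl (fun k _ => hterm k), sum_const, card_univ,
      Fintype.card_fin, nsmul_eq_mul, ← mul_assoc, inv_mul_cancel₀ hKne, one_mul]
end

section
/- (Lemma for Proposition 4: the SMC estimator being exactly constant forces constant incremental weights.) Fix integers T ≥ 1 and K ≥ 2, strictly positive unnormalized target densities γ_1, …, γ_T with normalizing constants Z_1, …, Z_T ∈ (0, ∞), and strictly positive normalized proposal densities q_1, …, q_T. Suppose that Ẑ_SMC(x_{1:T}^{1:K}, a_{1:T−1}^{1:K}) = Z_T for every particle configuration (x_{1:T}^{1:K}, a_{1:T−1}^{1:K}). Then for each t ∈ {1, …, T} the incremental weight function w_t is constant, i.e. w_t(x_{1:t}) = w_t(x'_{1:t}) for all x_{1:t}, x'_{1:t} ∈ X^t. -/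
open MeasureTheory Finset

noncomputable section

variable {X : Type*}

/-- Incremental weight functions: `w_1(x_1) = γ_1(x_1)/q_1(x_1)` and, for `t ≥ 2`,
`w_t(x_{1:t}) = γ_t(x_{1:t}) / (γ_{t-1}(x_{1:t-1}) q_t(x_{1:t}))`. -/
def incW (γ q : (t : ℕ) → (Fin t → X) → ℝ) : (t : ℕ) → (Fin t → X) → ℝ
  | 0, _ => 1
  | 1, v => γ 1 v / q 1 v
  | (t + 2), v => γ (t + 2) v / (γ (t + 1) (Fin.init v) * q (t + 2) v)

/-- Particle trajectories: `x̃_{1:1}^k = x_1^k` and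
`x̃_{1:t}^k = (x̃_{1:t-1}^{a_{t-1}^k}, x_t^k)`.  Here `x t k` denotes the particle
`x_{t+1}^k` and `a t k` denotes the ancestor index `a_{t+1}^k`. -/
def traj {K : ℕ} (x : ℕ → Fin K → X) (a : ℕ → Fin K → Fin K) :
    (t : ℕ) → Fin K → Fin t → X
  | 0, _ => Fin.elim0
  | 1, k => fun _ => x 0 k
  | (t + 2), k => Fin.snoc (traj x a (t + 1) (a t k)) (x (t + 1) k)

/-- SMC marginal likelihood estimator `Ẑ_SMC = ∏_{t=1}^T (1/K) ∑_k w_t^k`, where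
`w_t^k = w_t(x̃_{1:t}^k)`. -/
def smcZhat (γ q : (t : ℕ) → (Fin t → X) → ℝ) (T K : ℕ) (x : ℕ → Fin K → X)
    (a : ℕ → Fin K → Fin K) : ℝ :=
  ∏ t ∈ Finset.range T, ((K : ℝ)⁻¹ * ∑ k : Fin K, incW γ q (t + 1) (traj x a (t + 1) k))

/-- SMC sampling density
`Q_SMC = (∏_k q_1(x_1^k)) ∏_{t=2}^T ∏_k q_t(x̃_{1:t-1}^{a_{t-1}^k}, x_t^k) w̄_{t-1}^{a_{t-1}^k}`,
where `w̄_t^j = w_t^j / ∑_ℓ w_t^ℓ` are the normalized weights. -/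
def smcQ (γ q : (t : ℕ) → (Fin t → X) → ℝ) (T K : ℕ) (x : ℕ → Fin K → X)
    (a : ℕ → Fin K → Fin K) : ℝ :=
  (∏ k : Fin K, q 1 (traj x a 1 k)) *
    ∏ t ∈ Finset.range (T - 1), ∏ k : Fin K,
      q (t + 2) (traj x a (t + 2) k) *
        (incW γ q (t + 1) (traj x a (t + 1) (a t k)) /
          ∑ l : Fin K, incW γ q (t + 1) (traj x a (t + 1) l))

end

lemma traj_split_aux {X : Type*} (K' t0 : ℕ) (u u' : ℕ → X) :
    ∀ t (k : Fin (K' + 2)),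
      traj (fun s (k : Fin (K' + 2)) => if s < t0 ∧ k ≠ 0 then u' s else u s)
           (fun s (k : Fin (K' + 2)) => if s + 2 ≤ t0 then k else 0) t k
      = fun i : Fin t => if (i : ℕ) < t0 ∧ k ≠ 0 ∧ t ≤ t0 then u' i else u i := by
  intro t
  induction t with
  | zero => intro k; funext i; exact i.elim0
  | succ t ih =>
    cases t with
    | zero =>
      intro k
      funext i
      have hi : (i : ℕ) = 0 := by omega
      simp only [traj, hi]
      have : ((0 : ℕ) < t0 ∧ k ≠ 0 ∧ 1 ≤ t0) ↔ ((0 : ℕ) < t0 ∧ k ≠ 0) := by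
        constructor
        · rintro ⟨h1, h2, _⟩; exact ⟨h1, h2⟩
        · rintro ⟨h1, h2⟩; exact ⟨h1, h2, h1⟩
      rw [if_congr this rfl rfl]
    | succ s =>
      intro k
      by_cases hs : s + 2 ≤ t0
      · simp only [traj, if_pos hs, ih k]
        funext i
        refine Fin.lastCases ?_ ?_ i
        · rw [Fin.snoc_last]
          have hlt : s + 1 < t0 := by omega
          simp only [Fin.val_last]
          have e1 : (s + 1 < t0 ∧ k ≠ 0) ↔ (s + 1 < t0 ∧ k ≠ 0 ∧ s + 2 ≤ t0) := by
            constructor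
            · rintro ⟨h1, h2⟩; exact ⟨h1, h2, hs⟩
            · rintro ⟨h1, h2, _⟩; exact ⟨h1, h2⟩
          rw [if_congr e1 rfl rfl]
        · intro j
          rw [Fin.snoc_castSucc]
          simp only [Fin.coe_castSucc]
          have e1 : ((j : ℕ) < t0 ∧ k ≠ 0 ∧ s + 1 ≤ t0) ↔ ((j : ℕ) < t0 ∧ k ≠ 0 ∧ s + 2 ≤ t0) := by
            constructor
            · rintro ⟨h1, h2, _⟩; exact ⟨h1, h2, hs⟩
            · rintro ⟨h1, h2, _⟩; exact ⟨h1, h2, by omega⟩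
          rw [if_congr e1 rfl rfl]
      · simp only [traj, if_neg hs, ih 0]
        funext i
        refine Fin.lastCases ?_ ?_ i
        · rw [Fin.snoc_last]
          have h1 : ¬ (s + 1 < t0 ∧ k ≠ 0) := by
            rintro ⟨h, _⟩; omega
          have h2 : ¬ ((Fin.last (s+1) : ℕ) < t0 ∧ k ≠ 0 ∧ s + 2 ≤ t0) := by
            rintro ⟨_, _, h⟩; exact hs h
          rw [if_neg h1, if_neg h2, Fin.val_last]
        · intro j
          rw [Fin.snoc_castSucc]
          have h1 : ¬ ((j : ℕ) < t0 ∧ (0 : Fin (K'+2)) ≠ 0 ∧ s + 1 ≤ t0) := by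
            rintro ⟨_, h, _⟩; exact h rfl
          have h2 : ¬ ((Fin.castSucc j : ℕ) < t0 ∧ k ≠ 0 ∧ s + 2 ≤ t0) := by
            rintro ⟨_, _, h⟩; exact hs h
          rw [if_neg h1, if_neg h2, Fin.coe_castSucc]

lemma smcZhat_split_aux {X : Type*} (γ q : (t : ℕ) → (Fin t → X) → ℝ) (T K' t0 : ℕ) (u u' : ℕ → X) :
    smcZhat γ q T (K' + 2)
      (fun s (k : Fin (K' + 2)) => if s < t0 ∧ k ≠ 0 then u' s else u s)
      (fun s (k : Fin (K' + 2)) => if s + 2 ≤ t0 then k else 0)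
    = ∏ t ∈ Finset.range T,
        (((K' : ℝ) + 2)⁻¹ *
          (incW γ q (t + 1) (fun i : Fin (t + 1) => u i)
            + ((K' : ℝ) + 1) * incW γ q (t + 1)
                (fun i : Fin (t + 1) => if (i : ℕ) < t0 ∧ t + 1 ≤ t0 then u' i else u i))) := by
  unfold smcZhat
  refine Finset.prod_congr rfl ?_
  intro t _
  have hsum : (∑ k : Fin (K' + 2), incW γ q (t + 1)
      (traj (fun s (k : Fin (K' + 2)) => if s < t0 ∧ k ≠ 0 then u' s else u s)
            (fun s (k : Fin (K' + 2)) => if s + 2 ≤ t0 then k else 0) (t + 1) k))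
      = incW γ q (t + 1) (fun i : Fin (t + 1) => u i)
        + ((K' : ℝ) + 1) * incW γ q (t + 1)
            (fun i : Fin (t + 1) => if (i : ℕ) < t0 ∧ t + 1 ≤ t0 then u' i else u i) := by
    simp only [traj_split_aux]
    rw [Fin.sum_univ_succ]
    congr 1
    · congr 1
      funext i
      have : ¬ ((i : ℕ) < t0 ∧ (0 : Fin (K' + 2)) ≠ 0 ∧ t + 1 ≤ t0) := by
        rintro ⟨_, h, _⟩; exact h rfl
      rw [if_neg this]
    · have : ∀ k : Fin (K' + 1), incW γ q (t + 1)
          (fun i : Fin (t + 1) => if (i : ℕ) < t0 ∧ (k.succ : Fin (K'+2)) ≠ 0 ∧ t + 1 ≤ t0 then u' i else u i)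
          = incW γ q (t + 1) (fun i : Fin (t + 1) => if (i : ℕ) < t0 ∧ t + 1 ≤ t0 then u' i else u i) := by
        intro k
        congr 1
        funext i
        have e : ((i : ℕ) < t0 ∧ (k.succ : Fin (K'+2)) ≠ 0 ∧ t + 1 ≤ t0) ↔ ((i : ℕ) < t0 ∧ t + 1 ≤ t0) := by
          constructor
          · rintro ⟨h1, _, h2⟩; exact ⟨h1, h2⟩
          · rintro ⟨h1, h2⟩; exact ⟨h1, Fin.succ_ne_zero k, h2⟩
        rw [if_congr e rfl rfl]
      rw [Finset.sum_congr rfl (fun k _ => this k), Finset.sum_const]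
      simp [nsmul_eq_mul]
  rw [hsum]
  push_cast
  ring

theorem incW_const_aux
    {X : Type*} (T K : ℕ) (hT : 1 ≤ T) (hK : 2 ≤ K)
    (γ q : (t : ℕ) → (Fin t → X) → ℝ) (Z : ℕ → ℝ)
    (hγ_pos : ∀ t, 1 ≤ t → t ≤ T → ∀ v, 0 < γ t v)
    (hq_pos : ∀ t, 1 ≤ t → t ≤ T → ∀ v, 0 < q t v)
    (hconst : ∀ (x : ℕ → Fin K → X) (a : ℕ → Fin K → Fin K),
      smcZhat γ q T K x a = Z T) :
    ∀ t, 1 ≤ t → t ≤ T → ∀ v v' : Fin t → X, incW γ q t v = incW γ q t v' := by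
  obtain ⟨K', rfl⟩ : ∃ m, K = m + 2 := ⟨K - 2, by omega⟩
  have hwpos : ∀ t, 1 ≤ t → t ≤ T → ∀ v : Fin t → X, 0 < incW γ q t v := by
    intro t h1 h2 v
    match t, h1 with
    | 1, _ =>
      simp only [incW]
      exact div_pos (hγ_pos 1 le_rfl h2 v) (hq_pos 1 le_rfl h2 v)
    | (s + 2), _ =>
      simp only [incW]
      exact div_pos (hγ_pos _ (by omega) h2 v)
        (mul_pos (hγ_pos _ (by omega) (by omega) _) (hq_pos _ (by omega) h2 v))
  intro t0
  induction t0 using Nat.strong_induction_on with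
  | _ t0 IH =>
    intro ht0 htT v v'
    obtain ⟨t0', rfl⟩ : ∃ m, t0 = m + 1 := ⟨t0 - 1, by omega⟩
    set u : ℕ → X := fun i => if h : i < t0' + 1 then v ⟨i, h⟩ else v 0 with hu
    set u' : ℕ → X := fun i => if h : i < t0' + 1 then v' ⟨i, h⟩ else v 0 with hu'
    have huv : (fun i : Fin (t0' + 1) => u (i : ℕ)) = v := by
      funext i; simp [hu, i.isLt, Nat.not_lt.mpr (Nat.lt_succ_iff.mp i.isLt)]
    have huv' : (fun i : Fin (t0' + 1) => u' (i : ℕ)) = v' := by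
      funext i; simp [hu', i.isLt, Nat.not_lt.mpr (Nat.lt_succ_iff.mp i.isLt)]
    set F : ℕ → ℝ := fun t => incW γ q (t + 1) (fun i : Fin (t + 1) => u (i : ℕ)) with hF
    have hFpos : ∀ t ∈ Finset.range T, 0 < F t := by
      intro t ht
      simp only [Finset.mem_range] at ht
      exact hwpos (t + 1) (by omega) (by omega) _
    -- E1: constant configuration
    have hE1 : ∏ t ∈ Finset.range T, F t = Z T := by
      have h := hconst
        (fun s (k : Fin (K' + 2)) => if s < (t0' + 1) ∧ k ≠ 0 then u s else u s)
        (fun s (k : Fin (K' + 2)) => if s + 2 ≤ (t0' + 1) then k else 0)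
      rw [smcZhat_split_aux γ q T K' (t0' + 1) u u] at h
      simp only [ite_self] at h
      rw [← h]
      refine Finset.prod_congr rfl ?_
      intro t _
      have hne : ((K' : ℝ) + 2) ≠ 0 := by positivity
      field_simp
      ring
    -- E2: split configuration
    have hE2 : ∏ t ∈ Finset.range T,
        (((K' : ℝ) + 2)⁻¹ *
          (incW γ q (t + 1) (fun i : Fin (t + 1) => u (i : ℕ))
            + ((K' : ℝ) + 1) * incW γ q (t + 1)
                (fun i : Fin (t + 1) =>
                  if (i : ℕ) < t0' + 1 ∧ t + 1 ≤ t0' + 1 then u' (i : ℕ) else u (i : ℕ))))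
        = Z T := by
      have h := hconst
        (fun s (k : Fin (K' + 2)) => if s < (t0' + 1) ∧ k ≠ 0 then u' s else u s)
        (fun s (k : Fin (K' + 2)) => if s + 2 ≤ (t0' + 1) then k else 0)
      rw [smcZhat_split_aux γ q T K' (t0' + 1) u u'] at h
      exact h
    have hmem : t0' ∈ Finset.range T := by simp only [Finset.mem_range]; omega
    rw [← Finset.mul_prod_erase _ _ hmem] at hE1 hE2
    set P : ℝ := ∏ t ∈ (Finset.range T).erase t0', F t with hP
    have hPpos : 0 < P := Finset.prod_pos fun t ht => hFpos t (Finset.mem_of_mem_erase ht)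
    -- the erase-products agree
    have herase : ∏ t ∈ (Finset.range T).erase t0',
        (((K' : ℝ) + 2)⁻¹ *
          (incW γ q (t + 1) (fun i : Fin (t + 1) => u (i : ℕ))
            + ((K' : ℝ) + 1) * incW γ q (t + 1)
                (fun i : Fin (t + 1) =>
                  if (i : ℕ) < t0' + 1 ∧ t + 1 ≤ t0' + 1 then u' (i : ℕ) else u (i : ℕ))))
        = P := by
      refine Finset.prod_congr rfl ?_
      intro t ht
      have htn : t ≠ t0' := Finset.ne_of_mem_erase ht
      have htT' : t < T := Finset.mem_range.mp (Finset.mem_of_mem_erase ht)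
      have hne : ((K' : ℝ) + 2) ≠ 0 := by positivity
      by_cases hc : t + 1 ≤ t0' + 1
      · have hlt : t + 1 < t0' + 1 := by omega
        have heq : incW γ q (t + 1)
            (fun i : Fin (t + 1) =>
              if (i : ℕ) < t0' + 1 ∧ t + 1 ≤ t0' + 1 then u' (i : ℕ) else u (i : ℕ))
            = F t := by
          have h1 : (fun i : Fin (t + 1) =>
              if (i : ℕ) < t0' + 1 ∧ t + 1 ≤ t0' + 1 then u' (i : ℕ) else u (i : ℕ))
              = fun i : Fin (t + 1) => u' (i : ℕ) := by
            funext i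
            exact if_pos ⟨by omega, hc⟩
          rw [h1, hF]
          exact (IH (t + 1) hlt (by omega) (by omega) _ _).symm
        rw [heq, hF]
        field_simp
        ring
      · have h1 : (fun i : Fin (t + 1) =>
            if (i : ℕ) < t0' + 1 ∧ t + 1 ≤ t0' + 1 then u' (i : ℕ) else u (i : ℕ))
            = fun i : Fin (t + 1) => u (i : ℕ) := by
          funext i
          exact if_neg (fun h => hc h.2)
        rw [h1, hF]
        field_simp
        ring
    rw [herase] at hE2
    -- identify the distinguished factors
    have hfac : (fun i : Fin (t0' + 1) =>
        if (i : ℕ) < t0' + 1 ∧ t0' + 1 ≤ t0' + 1 then u' (i : ℕ) else u (i : ℕ))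
        = fun i : Fin (t0' + 1) => u' (i : ℕ) := by
      funext i
      exact if_pos ⟨i.isLt, le_rfl⟩
    rw [hfac, huv, huv'] at hE2
    have hFt0 : F t0' = incW γ q (t0' + 1) v := by
      show incW γ q (t0' + 1) (fun i : Fin (t0' + 1) => u (i : ℕ)) = _
      rw [huv]
    rw [hFt0] at hE1
    have hcancel : incW γ q (t0' + 1) v
        = ((K' : ℝ) + 2)⁻¹ * (incW γ q (t0' + 1) v + ((K' : ℝ) + 1) * incW γ q (t0' + 1) v') := by
      have := hE1.trans hE2.symm
      exact mul_right_cancel₀ (ne_of_gt hPpos) this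
    set A : ℝ := incW γ q (t0' + 1) v
    set B : ℝ := incW γ q (t0' + 1) v'
    have hne : ((K' : ℝ) + 2) ≠ 0 := by positivity
    have h3 : ((K' : ℝ) + 2) * A = A + ((K' : ℝ) + 1) * B := by
      conv_lhs => rw [hcancel]
      rw [← mul_assoc, mul_inv_cancel₀ hne, one_mul]
    have h4 : ((K' : ℝ) + 1) * A = ((K' : ℝ) + 1) * B := by ring_nf at h3 ⊢; linarith
    exact mul_left_cancel₀ (by positivity) h4

/-- **Lemma for Proposition 4 (forward direction): a constant SMC estimator forces constant
incremental weights.**  Fix `T ≥ 1`, `K ≥ 2`, strictly positive unnormalized targets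
`γ_1, …, γ_T` with normalizing constants `Z_1, …, Z_T ∈ (0, ∞)` and strictly positive
normalized proposals `q_1, …, q_T`.  If `Ẑ_SMC = Z_T` for every particle configuration,
then each incremental weight function `w_t` (`1 ≤ t ≤ T`) is constant. -/
theorem incW_constant_of_smcZhat_constant
    {X : Type*} [MeasurableSpace X] (μ : Measure X) [SigmaFinite μ]
    (T K : ℕ) (hT : 1 ≤ T) (hK : 2 ≤ K)
    (γ q : (t : ℕ) → (Fin t → X) → ℝ) (Z : ℕ → ℝ)
    (hγ_meas : ∀ t, 1 ≤ t → t ≤ T → Measurable (γ t))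
    (hγ_pos : ∀ t, 1 ≤ t → t ≤ T → ∀ v, 0 < γ t v)
    (hγ_int : ∀ t, 1 ≤ t → t ≤ T → Integrable (γ t) (Measure.pi fun _ : Fin t => μ))
    (hZ_def : ∀ t, 1 ≤ t → t ≤ T →
      ∫ v, γ t v ∂(Measure.pi fun _ : Fin t => μ) = Z t)
    (hZ_pos : ∀ t, 1 ≤ t → t ≤ T → 0 < Z t)
    (hq_meas : ∀ t, 1 ≤ t → t ≤ T → Measurable (q t))
    (hq_pos : ∀ t, 1 ≤ t → t ≤ T → ∀ v, 0 < q t v)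
    (hq_norm : ∀ t < T, ∀ vp : Fin t → X, ∫ y, q (t + 1) (Fin.snoc vp y) ∂μ = 1)
    (hconst : ∀ (x : ℕ → Fin K → X) (a : ℕ → Fin K → Fin K),
      smcZhat γ q T K x a = Z T) :
    ∀ t, 1 ≤ t → t ≤ T → ∀ v v' : Fin t → X, incW γ q t v = incW γ q t v' :=
  incW_const_aux T K hT hK γ q Z hγ_pos hq_pos hconst
end

section
/- (Lemma for Proposition 4: constant incremental weights determine the normalizing-constant ratios, the marginal consistency of the targets, and the proposals.) Let t ∈ {2, …, T} and suppose there is a constant c ∈ (0, ∞) with w_t(x_{1:t}) = c for all x_{1:t} ∈ X^t, i.e. γ_t(x_{1:t}) = c · γ_{t−1}(x_{1:t−1}) · q_t(x_{1:t}) for all x_{1:t}. Then c = Z_t/Z_{t−1}, the normalized target π_{t−1} is the marginal of π_t in the sense that π_{t−1}(x_{1:t−1}) = ∫ π_t(x_{1:t−1}, x_t) dμ(x_t) for all x_{1:t−1}, and q_t(x_{1:t}) = π_t(x_{1:t})/π_{t−1}(x_{1:t−1}) for all x_{1:t}. Moreover, if w_1(x_1) = c_1 for all x_1 with c_1 ∈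 (0, ∞), then c_1 = Z_1 and q_1 = π_1. -/
open MeasureTheory Finset

/-- Auxiliary Fubini-type lemma: integrating over `X^{n+1}` equals integrating the
last coordinate innermost via `Fin.snoc`. -/
lemma integral_pi_snoc_aux {X : Type*} [MeasurableSpace X] (μ : Measure X) [SigmaFinite μ]
    {n : ℕ} (f : (Fin (n + 1) → X) → ℝ)
    (hf : Integrable f (Measure.pi fun _ : Fin (n + 1) => μ)) :
    ∫ v, f v ∂(Measure.pi fun _ : Fin (n + 1) => μ)
      = ∫ vp, ∫ y, f (Fin.snoc vp y) ∂μ ∂(Measure.pi fun _ : Fin n => μ) := by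
  have hmp := measurePreserving_piFinSuccAbove (fun _ : Fin (n + 1) => μ) (Fin.last n)
  set e := MeasurableEquiv.piFinSuccAbove (fun _ : Fin (n + 1) => X) (Fin.last n) with he
  have hmps : MeasurePreserving e.symm (μ.prod (Measure.pi fun _ : Fin n => μ))
      (Measure.pi fun _ : Fin (n + 1) => μ) := MeasurePreserving.symm e hmp
  have hkey : ∀ p : X × (Fin n → X), f (e.symm p) = f (Fin.snoc p.2 p.1) := by
    intro p
    congr 1
    simp only [he, MeasurableEquiv.piFinSuccAbove, MeasurableEquiv.symm_mk,
      MeasurableEquiv.coe_mk, Equiv.symm_symm, Fin.insertNthEquiv_apply]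
    exact Fin.insertNth_last' p.1 p.2
  have h1 : ∫ v, f v ∂(Measure.pi fun _ : Fin (n + 1) => μ)
      = ∫ p : X × (Fin n → X), f (Fin.snoc p.2 p.1) ∂(μ.prod (Measure.pi fun _ : Fin n => μ)) := by
    rw [← hmps.integral_comp' f]
    exact integral_congr_ae (Filter.Eventually.of_forall hkey)
  have hint : Integrable (fun p : X × (Fin n → X) => f (Fin.snoc p.2 p.1))
      (μ.prod (Measure.pi fun _ : Fin n => μ)) := by
    have h2 := (hmps.integrable_comp_emb e.symm.measurableEmbedding).2 hf
    exact h2.congr (Filter.Eventually.of_forall hkey)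
  rw [h1, integral_prod_symm _ hint]

/-- Auxiliary: a tuple `Fin.snoc p y : Fin 1 → X` is the constant function `y`. -/
lemma snoc_zero_aux {X : Type*} (p : Fin 0 → X) (y : X) :
    (Fin.snoc p y : Fin 1 → X) = fun _ => y := by
  funext i
  have hi : i = Fin.last 0 := Fin.ext (by omega)
  rw [hi, Fin.snoc_last]

/-- **Lemma for Proposition 4: constant incremental weights determine the
normalizing-constant ratios, the marginal consistency of the targets, and the proposals.**
If, for some `t` with `2 ≤ t ≤ T` (written `t + 2` below with `t + 2 ≤ T`) there is a
constant `c ∈ (0, ∞)` with `w_{t+2} ≡ c`, equivalently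
`γ_{t+2}(x_{1:t+2}) = c · γ_{t+1}(x_{1:t+1}) · q_{t+2}(x_{1:t+2})` for all `x_{1:t+2}`,
then `c = Z_{t+2}/Z_{t+1}`, the normalized target `π_{t+1} = γ_{t+1}/Z_{t+1}` is the
marginal of `π_{t+2} = γ_{t+2}/Z_{t+2}`, and
`q_{t+2} = π_{t+2}(x_{1:t+2})/π_{t+1}(x_{1:t+1})`.  Moreover, if `w_1 ≡ c₁ ∈ (0, ∞)` then
`c₁ = Z_1` and `q_1 = π_1 = γ_1/Z_1`. -/
theorem constant_weight_determines_targets_and_proposals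
    {X : Type*} [MeasurableSpace X] (μ : Measure X) [SigmaFinite μ]
    (T : ℕ) (hT : 1 ≤ T)
    (γ q : (t : ℕ) → (Fin t → X) → ℝ) (Z : ℕ → ℝ)
    (hγ_meas : ∀ t, 1 ≤ t → t ≤ T → Measurable (γ t))
    (hγ_pos : ∀ t, 1 ≤ t → t ≤ T → ∀ v, 0 < γ t v)
    (hγ_int : ∀ t, 1 ≤ t → t ≤ T → Integrable (γ t) (Measure.pi fun _ : Fin t => μ))
    (hZ_def : ∀ t, 1 ≤ t → t ≤ T →
      ∫ v, γ t v ∂(Measure.pi fun _ : Fin t => μ) = Z t)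
    (hZ_pos : ∀ t, 1 ≤ t → t ≤ T → 0 < Z t)
    (hq_meas : ∀ t, 1 ≤ t → t ≤ T → Measurable (q t))
    (hq_pos : ∀ t, 1 ≤ t → t ≤ T → ∀ v, 0 < q t v)
    (hq_norm : ∀ t < T, ∀ vp : Fin t → X, ∫ y, q (t + 1) (Fin.snoc vp y) ∂μ = 1)
    (t : ℕ) (ht : t + 2 ≤ T) (c : ℝ) (hc : 0 < c)
    (hw : ∀ v : Fin (t + 2) → X, incW γ q (t + 2) v = c) :
    c = Z (t + 2) / Z (t + 1) ∧
      (∀ vp : Fin (t + 1) → X,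
        γ (t + 1) vp / Z (t + 1)
          = ∫ y, γ (t + 2) (Fin.snoc vp y) / Z (t + 2) ∂μ) ∧
      (∀ v : Fin (t + 2) → X,
        q (t + 2) v
          = (γ (t + 2) v / Z (t + 2)) / (γ (t + 1) (Fin.init v) / Z (t + 1))) ∧
      (∀ c₁ : ℝ, 0 < c₁ → (∀ v : Fin 1 → X, incW γ q 1 v = c₁) →
        c₁ = Z 1 ∧ ∀ v : Fin 1 → X, q 1 v = γ 1 v / Z 1) := by
  have ht1 : t + 1 ≤ T := by omega
  -- factorization of γ (t+2)
  have hfact : ∀ v : Fin (t + 2) → X,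
      γ (t + 2) v = c * (γ (t + 1) (Fin.init v) * q (t + 2) v) := by
    intro v
    have h := hw v
    have hden : γ (t + 1) (Fin.init v) * q (t + 2) v ≠ 0 :=
      (mul_pos (hγ_pos (t + 1) (by omega) ht1 _) (hq_pos (t + 2) (by omega) ht _)).ne'
    rw [show incW γ q (t + 2) v
        = γ (t + 2) v / (γ (t + 1) (Fin.init v) * q (t + 2) v) from rfl] at h
    field_simp at h
    have h' : γ (t + 2) v / (γ (t + 1) (Fin.init v) * q (t + 2) v) = c := hw v
    linarith [(div_eq_iff hden).1 h']
  -- inner integral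
  have hinner : ∀ vp : Fin (t + 1) → X,
      ∫ y, γ (t + 2) (Fin.snoc vp y) ∂μ = c * γ (t + 1) vp := by
    intro vp
    have : ∀ y, γ (t + 2) (Fin.snoc vp y)
        = c * γ (t + 1) vp * q (t + 2) (Fin.snoc vp y) := by
      intro y
      rw [hfact (Fin.snoc vp y), Fin.init_snoc]
      ring
    simp only [this]
    rw [integral_const_mul, hq_norm (t + 1) (by omega) vp, mul_one]
  -- Fubini: Z (t+2) = c * Z (t+1)
  have hZeq : Z (t + 2) = c * Z (t + 1) := by
    rw [← hZ_def (t + 2) (by omega) ht, ← hZ_def (t + 1) (by omega) ht1]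
    rw [integral_pi_snoc_aux μ (γ (t + 2)) (hγ_int (t + 2) (by omega) ht)]
    simp only [hinner]
    rw [integral_const_mul]
  have hZ1pos := hZ_pos (t + 1) (by omega) ht1
  have hZ2pos := hZ_pos (t + 2) (by omega) ht
  refine ⟨?_, ?_, ?_, ?_⟩
  · rw [hZeq]
    field_simp
  · intro vp
    have : ∀ y, γ (t + 2) (Fin.snoc vp y) / Z (t + 2)
        = (Z (t + 2))⁻¹ * γ (t + 2) (Fin.snoc vp y) := by
      intro y; rw [inv_mul_eq_div]
    simp only [this]
    rw [integral_const_mul, hinner vp, hZeq]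
    have hγpos := hγ_pos (t + 1) (by omega) ht1 vp
    field_simp
  · intro v
    have h := hfact v
    have hγpos := hγ_pos (t + 1) (by omega) ht1 (Fin.init v)
    rw [hZeq]
    field_simp
    rw [h]; ring
  · intro c₁ hc₁ hw1
    have hfact1 : ∀ v : Fin 1 → X, γ 1 v = c₁ * q 1 v := by
      intro v
      have h := hw1 v
      have hqpos := hq_pos 1 le_rfl hT v
      rw [show incW γ q 1 v = γ 1 v / q 1 v from rfl] at h
      field_simp at h
      linarith [h]
    have hchange : ∀ g : (Fin 1 → X) → ℝ,
        ∫ v, g v ∂(Measure.pi fun _ : Fin 1 => μ) = ∫ x, g (fun _ => x) ∂μ := by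
      intro g
      have hcomp := (measurePreserving_funUnique μ (Fin 1)).integral_comp'
        (f := MeasurableEquiv.funUnique (Fin 1) X) (fun x => g (fun _ => x))
      rw [← hcomp]
      refine integral_congr_ae (Filter.Eventually.of_forall fun v => ?_)
      congr 1
      funext i
      have hi : i = (default : Fin 1) := Fin.ext (by omega)
      rw [hi]
      rfl
    have hq1 : ∫ x, q 1 (fun _ => x) ∂μ = 1 := by
      have h := hq_norm 0 (by omega) (fun i => i.elim0)
      calc ∫ x, q 1 (fun _ => x) ∂μ
          = ∫ y, q 1 (Fin.snoc (fun i => i.elim0) y) ∂μ := by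
            refine integral_congr_ae (Filter.Eventually.of_forall fun y => ?_)
            simp only [snoc_zero_aux]
        _ = 1 := h
    have hZ1 : Z 1 = c₁ := by
      rw [← hZ_def 1 le_rfl hT, hchange (γ 1)]
      simp only [hfact1]
      rw [integral_const_mul, hq1, mul_one]
    refine ⟨hZ1.symm, fun v => ?_⟩
    rw [hZ1, hfact1 v]
    field_simp
end

section
/- (Proposition 4.) Fix integers T ≥ 1 and K > 1, strictly positive unnormalized target densities γ_1, …, γ_T with normalizing constants Z_1, …, Z_T ∈ (0, ∞) and normalized targets π_t = γ_t/Z_t, and strictly positive normalized proposal densities q_1, …, q_T. Define P_SMC(x_{1:T}^{1:K}, a_{1:T−1}^{1:K}) = Q_SMC(x_{1:T}^{1:K}, a_{1:T−1}^{1:K}) · Ẑ_SMC(x_{1:T}^{1:K}, a_{1:T−1}^{1:K}) / Z_T. Then P_SMC(x_{1:T}^{1:K}, a_{1:T−1}^{1:K}) = Q_SMC(x_{1:T}^{1:K}, a_{1:T−1}^{1:K}) for all particle configurations (x_{1:T}^{1:K}, a_{1:T−1}^{1:K}) if and only if both: (1) π_t(x_{1:t}) = ∫ π_T(x_{1:t},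 x_{t+1:T}) dμ^{⊗(T−t)}(x_{t+1:T}) for all x_{1:t} and all t = 1, …, T, and (2) q_1(x_1) = π_1(x_1) for all x_1 and q_t(x_{1:t}) = π_t(x_{1:t})/π_{t−1}(x_{1:t−1}) for all x_{1:t} and t = 2, …, T. -/
open MeasureTheory Finset

section SmcAuxLemmas

variable {X : Type*}

lemma smc_incW_one (γ q : (t : ℕ) → (Fin t → X) → ℝ) (v : Fin 1 → X) :
    incW γ q 1 v = γ 1 v / q 1 v := rfl

lemma smc_incW_add_two (γ q : (t : ℕ) → (Fin t → X) → ℝ) (t : ℕ) (v : Fin (t + 2) → X) :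
    incW γ q (t + 2) v = γ (t + 2) v / (γ (t + 1) (Fin.init v) * q (t + 2) v) := rfl

lemma smc_incW_pos {T : ℕ} {γ q : (t : ℕ) → (Fin t → X) → ℝ}
    (hγ_pos : ∀ t, 1 ≤ t → t ≤ T → ∀ v, 0 < γ t v)
    (hq_pos : ∀ t, 1 ≤ t → t ≤ T → ∀ v, 0 < q t v)
    {t : ℕ} (h1 : 1 ≤ t) (h2 : t ≤ T) (v : Fin t → X) : 0 < incW γ q t v := by
  rcases t with _ | _ | t
  · omega
  · rw [smc_incW_one]
    exact div_pos (hγ_pos 1 le_rfl h2 v) (hq_pos 1 le_rfl h2 v)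
  · rw [smc_incW_add_two]
    exact div_pos (hγ_pos _ (by omega) h2 v)
      (mul_pos (hγ_pos (t + 1) (by omega) (by omega) _) (hq_pos _ (by omega) h2 v))

lemma smc_zero_ne_one_fin {K : ℕ} [NeZero K] (hK : 1 < K) : (0 : Fin K) ≠ 1 := by
  intro h
  have h2 := congrArg Fin.val h
  rw [Fin.val_zero, Fin.val_one'] at h2
  rw [Nat.mod_eq_of_lt hK] at h2
  omega

lemma smc_sum_ite_one {K : ℕ} [NeZero K] (hK : 1 < K) (b c : ℝ) :
    ∑ k : Fin K, (if k = (1 : Fin K) then b else c) = b + ((K : ℝ) - 1) * c := by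
  have h1 : (1 : Fin K) ∈ (Finset.univ : Finset (Fin K)) := Finset.mem_univ _
  rw [← Finset.add_sum_erase _ _ h1, if_pos rfl]
  congr 1
  rw [Finset.sum_congr rfl (fun k hk => if_neg (Finset.ne_of_mem_erase hk)),
    Finset.sum_const, Finset.card_erase_of_mem h1, Finset.card_univ, Fintype.card_fin,
    nsmul_eq_mul, Nat.cast_sub (by omega : 1 ≤ K), Nat.cast_one]

lemma smc_prod_cancel {T s : ℕ} (hs : s < T) {f g : ℕ → ℝ}
    (hfg : ∀ t, t < T → t ≠ s → f t = g t)
    (hf : ∀ t, t < T → 0 < f t)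
    (h : ∏ t ∈ Finset.range T, f t = ∏ t ∈ Finset.range T, g t) : f s = g s := by
  have hs' : s ∈ Finset.range T := Finset.mem_range.2 hs
  rw [← Finset.mul_prod_erase _ f hs', ← Finset.mul_prod_erase _ g hs'] at h
  have he : ∏ t ∈ (Finset.range T).erase s, g t = ∏ t ∈ (Finset.range T).erase s, f t :=
    Finset.prod_congr rfl fun t ht =>
      (hfg t (Finset.mem_range.1 (Finset.mem_of_mem_erase ht)) (Finset.ne_of_mem_erase ht)).symm
  rw [he] at h
  have hpos : (0 : ℝ) < ∏ t ∈ (Finset.range T).erase s, f t :=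
    Finset.prod_pos fun t ht => hf t (Finset.mem_range.1 (Finset.mem_of_mem_erase ht))
  exact mul_right_cancel₀ hpos.ne' h

lemma smc_traj_C2 {K : ℕ} [NeZero K] (hK : 1 < K) (v : ℕ → X) (s : ℕ) (u : X) :
    ∀ t (k : Fin K),
      traj (fun r k => if r = s ∧ k = 1 then u else v r) (fun _ _ => 0) (t + 1) k
        = fun i : Fin (t + 1) => if (i : ℕ) = s ∧ k = 1 ∧ t = s then u else v i := by
  intro t
  induction t with
  | zero =>
    intro k
    funext i
    have hi : (i : ℕ) = 0 := by omega
    show (if 0 = s ∧ k = 1 then u else v 0) = _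
    rw [hi]
    exact if_congr (by tauto) rfl rfl
  | succ t ih =>
    intro k
    have e : traj (fun r k => if r = s ∧ k = 1 then u else v r)
          (fun _ _ => (0 : Fin K)) (t + 2) k
        = Fin.snoc (traj (fun r k => if r = s ∧ k = 1 then u else v r)
            (fun _ _ => (0 : Fin K)) (t + 1) 0)
          (if t + 1 = s ∧ k = 1 then u else v (t + 1)) := rfl
    rw [e, ih 0]
    funext i
    refine Fin.lastCases ?_ (fun j => ?_) i
    · simp only [Fin.snoc_last, Fin.val_last]
      exact if_congr (by tauto) rfl rfl
    · simp only [Fin.snoc_castSucc, Fin.coe_castSucc]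
      rw [if_neg (by rintro ⟨_, h01, _⟩; exact smc_zero_ne_one_fin hK h01)]
      have hj := j.isLt
      rw [if_neg (by rintro ⟨h1, _, h3⟩; omega)]

lemma smc_traj_C3 {K : ℕ} [NeZero K] (hK : 1 < K) (p p' : ℕ → X) (σ : ℕ) :
    ∀ t (k : Fin K),
      traj (fun r k => if k = 1 then p' r else p r)
          (fun r k => if k = 1 ∧ r < σ then 1 else 0) (t + 1) k
        = fun i : Fin (t + 1) => if k = 1 ∧ ((i : ℕ) = t ∨ t ≤ σ) then p' i else p i := by
  intro t
  induction t with
  | zero =>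
    intro k
    funext i
    have hi : (i : ℕ) = 0 := by omega
    show (if k = 1 then p' 0 else p 0) = _
    rw [hi]
    by_cases hk : k = 1 <;> simp [hk]
  | succ t ih =>
    intro k
    have e : traj (fun r k => if k = 1 then p' r else p r)
          (fun r k => if k = 1 ∧ r < σ then (1 : Fin K) else 0) (t + 2) k
        = Fin.snoc (traj (fun r k => if k = 1 then p' r else p r)
            (fun r k => if k = 1 ∧ r < σ then (1 : Fin K) else 0) (t + 1)
            (if k = 1 ∧ t < σ then 1 else 0))
          (if k = 1 then p' (t + 1) else p (t + 1)) := rfl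
    rw [e]
    by_cases hk : k = 1
    · by_cases hσ : t < σ
      · rw [if_pos ⟨hk, hσ⟩, ih 1]
        funext i
        refine Fin.lastCases ?_ (fun j => ?_) i
        · simp [hk, Fin.snoc_last, Fin.val_last]
        · have h1 : t ≤ σ := by omega
          have h2 : t + 1 ≤ σ := by omega
          simp [hk, Fin.snoc_castSucc, Fin.coe_castSucc, h1, h2]
      · rw [if_neg (fun hh => hσ hh.2), ih 0]
        funext i
        refine Fin.lastCases ?_ (fun j => ?_) i
        · simp [hk, Fin.snoc_last, Fin.val_last]
        · have hj := j.isLt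
          have h1 : ¬ ((j : ℕ) = t + 1) := by omega
          have h2 : ¬ (t + 1 ≤ σ) := by omega
          simp [hk, smc_zero_ne_one_fin hK, Fin.snoc_castSucc, Fin.coe_castSucc, h1, h2]
    · rw [if_neg (fun hh => hk hh.1), ih 0]
      funext i
      refine Fin.lastCases ?_ (fun j => ?_) i
      · simp [hk, Fin.snoc_last, Fin.val_last]
      · simp [hk, smc_zero_ne_one_fin hK, Fin.snoc_castSucc, Fin.coe_castSucc]

lemma smc_prod_tele (Z : ℕ → ℝ) : ∀ T, 1 ≤ T → (∀ t, 1 ≤ t → t ≤ T → Z t ≠ 0) →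
    ∏ t ∈ Finset.range T, (if t = 0 then Z 1 else Z (t + 1) / Z t) = Z T := by
  intro T
  induction T with
  | zero => omega
  | succ n ih =>
    intro _ hne
    by_cases hn : n = 0
    · subst hn
      rw [Finset.prod_range_one, if_pos rfl]
    · rw [Finset.prod_range_succ, ih (by omega) (fun t h1 h2 => hne t h1 (by omega)),
        if_neg hn, mul_comm, div_mul_cancel₀ _ (hne n (by omega) (by omega))]

lemma smc_incW_const {T K : ℕ} (hT : 1 ≤ T) (hK : 1 < K)
    (γ q : (t : ℕ) → (Fin t → X) → ℝ) (ZT : ℝ)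
    (hγ_pos : ∀ t, 1 ≤ t → t ≤ T → ∀ v, 0 < γ t v)
    (hq_pos : ∀ t, 1 ≤ t → t ≤ T → ∀ v, 0 < q t v)
    (hZhat : ∀ (x : ℕ → Fin K → X) (a : ℕ → Fin K → Fin K), smcZhat γ q T K x a = ZT) :
    ∀ t, t < T → ∀ v v' : Fin (t + 1) → X, incW γ q (t + 1) v = incW γ q (t + 1) v' := by
  haveI : NeZero K := ⟨by omega⟩
  have hW : ∀ t, t < T → ∀ v : Fin (t + 1) → X, 0 < incW γ q (t + 1) v :=
    fun t ht v => smc_incW_pos hγ_pos hq_pos (by omega) (by omega) v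
  have hKR : (1 : ℝ) < (K : ℝ) := by exact_mod_cast hK
  have hKinv : (0 : ℝ) < (K : ℝ)⁻¹ := by
    have h0 : (0 : ℝ) < (K : ℝ) := by linarith
    positivity
  have hK1 : (0 : ℝ) < (K : ℝ) - 1 := by linarith
  have hfac : ∀ A B : ℝ, 0 < A → 0 < B → 0 < (K : ℝ)⁻¹ * (A + ((K : ℝ) - 1) * B) :=
    fun A B hA hB => mul_pos hKinv (add_pos hA (mul_pos hK1 hB))
  have hsum : ∀ (x : ℕ → Fin K → X) (a : ℕ → Fin K → Fin K)
      (A B : (t : ℕ) → Fin (t + 1) → X),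
      (∀ t, t < T → ∀ k : Fin K, traj x a (t + 1) k = if k = 1 then A t else B t) →
      smcZhat γ q T K x a
        = ∏ t ∈ Finset.range T,
            ((K : ℝ)⁻¹ * (incW γ q (t + 1) (A t) + ((K : ℝ) - 1) * incW γ q (t + 1) (B t))) := by
    intro x a A B h
    unfold smcZhat
    refine Finset.prod_congr rfl fun t ht => ?_
    congr 1
    have hterm : ∀ k : Fin K, incW γ q (t + 1) (traj x a (t + 1) k)
        = if k = 1 then incW γ q (t + 1) (A t) else incW γ q (t + 1) (B t) := by
      intro k
      rw [h t (Finset.mem_range.1 ht) k]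
      by_cases hk : k = 1 <;> simp [hk]
    rw [Finset.sum_congr rfl fun k _ => hterm k, smc_sum_ite_one hK]
  -- Step 1: the incremental weight does not depend on the final coordinate
  have step1 : ∀ s, s < T → ∀ (v : ℕ → X) (u u' : X),
      incW γ q (s + 1) (fun i : Fin (s + 1) => if (i : ℕ) = s then u else v i)
        = incW γ q (s + 1) (fun i : Fin (s + 1) => if (i : ℕ) = s then u' else v i) := by
    intro s hs v u u'
    have hz : ∀ u0 : X,
        smcZhat γ q T K (fun r k => if r = s ∧ k = 1 then u0 else v r) (fun _ _ => 0)
          = ∏ t ∈ Finset.range T, ((K : ℝ)⁻¹ *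
              (incW γ q (t + 1)
                  (fun i : Fin (t + 1) => if (i : ℕ) = s ∧ t = s then u0 else v i)
                + ((K : ℝ) - 1) * incW γ q (t + 1) (fun i : Fin (t + 1) => v i))) := by
      intro u0
      refine hsum _ _ (fun t (i : Fin (t + 1)) => if (i : ℕ) = s ∧ t = s then u0 else v i)
        (fun t (i : Fin (t + 1)) => v i) (fun t ht k => ?_)
      rw [smc_traj_C2 hK v s u0 t k]
      by_cases hk : k = 1
      · rw [if_pos hk]
        funext i
        show (if (i : ℕ) = s ∧ k = 1 ∧ t = s then u0 else v i)
          = if (i : ℕ) = s ∧ t = s then u0 else v i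
        exact if_congr (by tauto) rfl rfl
      · rw [if_neg hk]
        funext i
        show (if (i : ℕ) = s ∧ k = 1 ∧ t = s then u0 else v i) = v i
        rw [if_neg (by tauto)]
    have h1 := hZhat (fun r k => if r = s ∧ k = 1 then u else v r) (fun _ _ => 0)
    have h2 := hZhat (fun r k => if r = s ∧ k = 1 then u' else v r) (fun _ _ => 0)
    rw [hz u] at h1
    rw [hz u'] at h2
    have hcan := smc_prod_cancel hs
      (f := fun t => (K : ℝ)⁻¹ *
        (incW γ q (t + 1) (fun i : Fin (t + 1) => if (i : ℕ) = s ∧ t = s then u else v i)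
          + ((K : ℝ) - 1) * incW γ q (t + 1) (fun i : Fin (t + 1) => v i)))
      (g := fun t => (K : ℝ)⁻¹ *
        (incW γ q (t + 1) (fun i : Fin (t + 1) => if (i : ℕ) = s ∧ t = s then u' else v i)
          + ((K : ℝ) - 1) * incW γ q (t + 1) (fun i : Fin (t + 1) => v i)))
      (fun t ht hts => by
        show (K : ℝ)⁻¹ *
            (incW γ q (t + 1) (fun i : Fin (t + 1) => if (i : ℕ) = s ∧ t = s then u else v i)
              + ((K : ℝ) - 1) * incW γ q (t + 1) (fun i : Fin (t + 1) => v i))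
          = (K : ℝ)⁻¹ *
            (incW γ q (t + 1) (fun i : Fin (t + 1) => if (i : ℕ) = s ∧ t = s then u' else v i)
              + ((K : ℝ) - 1) * incW γ q (t + 1) (fun i : Fin (t + 1) => v i))
        have hA : (fun i : Fin (t + 1) => if (i : ℕ) = s ∧ t = s then u else v i)
            = fun i : Fin (t + 1) => if (i : ℕ) = s ∧ t = s then u' else v i := by
          funext i
          rw [if_neg (by tauto), if_neg (by tauto)]
        rw [hA])
      (fun t ht => hfac _ _ (hW t ht _) (hW t ht _))
      (h1.trans h2.symm)
    have hcan2 := mul_left_cancel₀ hKinv.ne' hcan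
    have hcan3 := add_right_cancel hcan2
    have hAu : (fun i : Fin (s + 1) => if (i : ℕ) = s ∧ s = s then u else v i)
        = fun i : Fin (s + 1) => if (i : ℕ) = s then u else v i := by
      funext i; exact if_congr (by tauto) rfl rfl
    have hAu' : (fun i : Fin (s + 1) => if (i : ℕ) = s ∧ s = s then u' else v i)
        = fun i : Fin (s + 1) => if (i : ℕ) = s then u' else v i := by
      funext i; exact if_congr (by tauto) rfl rfl
    rw [hAu, hAu'] at hcan3
    exact hcan3
  -- Step 2: weights at later times are constant
  have step2 : ∀ s, s + 2 ≤ T → ∀ p p' : ℕ → X,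
      incW γ q (s + 2) (fun i : Fin (s + 2) => p' i)
        = incW γ q (s + 2) (fun i : Fin (s + 2) => p i) := by
    intro s hs2 p p'
    have hz : ∀ σ : ℕ,
        smcZhat γ q T K (fun r k => if k = 1 then p' r else p r)
            (fun r k => if k = 1 ∧ r < σ then 1 else 0)
          = ∏ t ∈ Finset.range T, ((K : ℝ)⁻¹ *
              (incW γ q (t + 1)
                  (fun i : Fin (t + 1) => if (i : ℕ) = t ∨ t ≤ σ then p' i else p i)
                + ((K : ℝ) - 1) * incW γ q (t + 1) (fun i : Fin (t + 1) => p i))) := by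
      intro σ
      refine hsum _ _
        (fun t (i : Fin (t + 1)) => if (i : ℕ) = t ∨ t ≤ σ then p' i else p i)
        (fun t (i : Fin (t + 1)) => p i) (fun t ht k => ?_)
      rw [smc_traj_C3 hK p p' σ t k]
      by_cases hk : k = 1
      · rw [if_pos hk]
        funext i
        show (if k = 1 ∧ ((i : ℕ) = t ∨ t ≤ σ) then p' i else p i)
          = if (i : ℕ) = t ∨ t ≤ σ then p' i else p i
        exact if_congr (by tauto) rfl rfl
      · rw [if_neg hk]
        funext i
        show (if k = 1 ∧ ((i : ℕ) = t ∨ t ≤ σ) then p' i else p i) = p i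
        rw [if_neg (by tauto)]
    have h1 := hZhat (fun r k => if k = 1 then p' r else p r)
      (fun r k => if k = 1 ∧ r < s + 1 then 1 else 0)
    have h2 := hZhat (fun r k => if k = 1 then p' r else p r)
      (fun r k => if k = 1 ∧ r < s then 1 else 0)
    rw [hz (s + 1)] at h1
    rw [hz s] at h2
    have hcan := smc_prod_cancel (show s + 1 < T by omega)
      (f := fun t => (K : ℝ)⁻¹ *
        (incW γ q (t + 1)
            (fun i : Fin (t + 1) => if (i : ℕ) = t ∨ t ≤ s + 1 then p' i else p i)
          + ((K : ℝ) - 1) * incW γ q (t + 1) (fun i : Fin (t + 1) => p i)))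
      (g := fun t => (K : ℝ)⁻¹ *
        (incW γ q (t + 1)
            (fun i : Fin (t + 1) => if (i : ℕ) = t ∨ t ≤ s then p' i else p i)
          + ((K : ℝ) - 1) * incW γ q (t + 1) (fun i : Fin (t + 1) => p i)))
      (fun t ht hts => by
        show (K : ℝ)⁻¹ *
            (incW γ q (t + 1)
                (fun i : Fin (t + 1) => if (i : ℕ) = t ∨ t ≤ s + 1 then p' i else p i)
              + ((K : ℝ) - 1) * incW γ q (t + 1) (fun i : Fin (t + 1) => p i))
          = (K : ℝ)⁻¹ *
            (incW γ q (t + 1)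
                (fun i : Fin (t + 1) => if (i : ℕ) = t ∨ t ≤ s then p' i else p i)
              + ((K : ℝ) - 1) * incW γ q (t + 1) (fun i : Fin (t + 1) => p i))
        have hA : (fun i : Fin (t + 1) => if (i : ℕ) = t ∨ t ≤ s + 1 then p' i else p i)
            = fun i : Fin (t + 1) => if (i : ℕ) = t ∨ t ≤ s then p' i else p i := by
          funext i
          exact if_congr (by omega) rfl rfl
        rw [hA])
      (fun t ht => hfac _ _ (hW t ht _) (hW t ht _))
      (h1.trans h2.symm)
    have hcan2 := mul_left_cancel₀ hKinv.ne' hcan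
    have hcan3 := add_right_cancel hcan2
    have hL : (fun i : Fin (s + 1 + 1) => if (i : ℕ) = s + 1 ∨ s + 1 ≤ s + 1 then p' i else p i)
        = fun i : Fin (s + 1 + 1) => p' i := by
      funext i
      rw [if_pos (Or.inr le_rfl)]
    have hR : (fun i : Fin (s + 1 + 1) => if (i : ℕ) = s + 1 ∨ s + 1 ≤ s then p' i else p i)
        = fun i : Fin (s + 1 + 1) => if (i : ℕ) = s + 1 then p' (s + 1) else p i := by
      funext i
      by_cases h : (i : ℕ) = s + 1
      · rw [if_pos (Or.inl h), if_pos h, h]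
      · rw [if_neg (by omega), if_neg h]
    rw [hL, hR] at hcan3
    have hstep1 := step1 (s + 1) (by omega) p (p' (s + 1)) (p (s + 1))
    have hpp : (fun i : Fin (s + 1 + 1) => if (i : ℕ) = s + 1 then p (s + 1) else p i)
        = fun i : Fin (s + 1 + 1) => p i := by
      funext i
      by_cases h : (i : ℕ) = s + 1
      · rw [if_pos h, h]
      · rw [if_neg h]
    rw [hpp] at hstep1
    exact hcan3.trans hstep1
  -- combine
  intro t ht v v'
  rcases t with _ | s
  · set w : ℕ → X := fun _ => v' ⟨0, by omega⟩ with hwdef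
    have key := step1 0 (by omega) w (v ⟨0, by omega⟩) (v' ⟨0, by omega⟩)
    have e1 : (fun i : Fin (0 + 1) => if (i : ℕ) = 0 then v ⟨0, by omega⟩ else w (i : ℕ)) = v := by
      funext i
      have hi : (i : ℕ) = 0 := by have := i.isLt; omega
      rw [if_pos hi]
      exact congrArg v (Fin.ext (by rw [hi]))
    have e2 : (fun i : Fin (0 + 1) => if (i : ℕ) = 0 then v' ⟨0, by omega⟩ else w (i : ℕ)) = v' := by
      funext i
      have hi : (i : ℕ) = 0 := by have := i.isLt; omega
      rw [if_pos hi]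
      exact congrArg v' (Fin.ext (by rw [hi]))
    rw [e1, e2] at key
    exact key
  · set pv : ℕ → X := fun r => if h : r < s + 2 then v ⟨r, h⟩ else v ⟨0, by omega⟩ with hpv
    set pv' : ℕ → X := fun r => if h : r < s + 2 then v' ⟨r, h⟩ else v' ⟨0, by omega⟩ with hpv'
    have key := step2 s (by omega) pv pv'
    have e1 : (fun i : Fin (s + 2) => pv (i : ℕ)) = v := by
      funext i
      simp only [hpv]
      rw [dif_pos i.isLt]
    have e2 : (fun i : Fin (s + 2) => pv' (i : ℕ)) = v' := by
      funext i
      simp only [hpv']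
      rw [dif_pos i.isLt]
    rw [e1, e2] at key
    exact key.symm

end SmcAuxLemmas

/-- **Proposition 4.**
Fix `T ≥ 1` and `K > 1`, strictly positive unnormalized targets `γ_1, …, γ_T` with
normalizing constants `Z_1, …, Z_T ∈ (0, ∞)` (normalized targets `π_t = γ_t/Z_t`), and
strictly positive normalized proposals `q_1, …, q_T`.  With
`P_SMC = Q_SMC · Ẑ_SMC / Z_T`, we have `P_SMC = Q_SMC` for all particle configurations if
and only if (1) for every `t = 1, …, T` the normalized target `π_t` is the marginal of the
final target `π_T`, and (2) `q_1 = π_1` and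
`q_t(x_{1:t}) = π_t(x_{1:t})/π_{t-1}(x_{1:t-1})` for `t = 2, …, T`. -/
theorem p_smc_eq_q_smc_iff
    {X : Type*} [MeasurableSpace X] (μ : Measure X) [SigmaFinite μ]
    (T K : ℕ) (hT : 1 ≤ T) (hK : 1 < K)
    (γ q : (t : ℕ) → (Fin t → X) → ℝ) (Z : ℕ → ℝ)
    (hγ_meas : ∀ t, 1 ≤ t → t ≤ T → Measurable (γ t))
    (hγ_pos : ∀ t, 1 ≤ t → t ≤ T → ∀ v, 0 < γ t v)
    (hγ_int : ∀ t, 1 ≤ t → t ≤ T → Integrable (γ t) (Measure.pi fun _ : Fin t => μ))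
    (hZ_def : ∀ t, 1 ≤ t → t ≤ T →
      ∫ v, γ t v ∂(Measure.pi fun _ : Fin t => μ) = Z t)
    (hZ_pos : ∀ t, 1 ≤ t → t ≤ T → 0 < Z t)
    (hq_meas : ∀ t, 1 ≤ t → t ≤ T → Measurable (q t))
    (hq_pos : ∀ t, 1 ≤ t → t ≤ T → ∀ v, 0 < q t v)
    (hq_norm : ∀ t < T, ∀ vp : Fin t → X, ∫ y, q (t + 1) (Fin.snoc vp y) ∂μ = 1) :
    (∀ (x : ℕ → Fin K → X) (a : ℕ → Fin K → Fin K),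
        smcQ γ q T K x a * smcZhat γ q T K x a / Z T = smcQ γ q T K x a)
      ↔ ((∀ t s : ℕ, 1 ≤ t → t + s = T → ∀ vp : Fin t → X,
            γ t vp / Z t
              = ∫ w : Fin s → X, γ (t + s) (Fin.append vp w) / Z (t + s)
                  ∂(Measure.pi fun _ : Fin s => μ)) ∧
          (∀ v : Fin 1 → X, q 1 v = γ 1 v / Z 1) ∧
          (∀ t : ℕ, t + 2 ≤ T → ∀ v : Fin (t + 2) → X,
            q (t + 2) v
              = (γ (t + 2) v / Z (t + 2)) / (γ (t + 1) (Fin.init v) / Z (t + 1)))) := by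
  have hZT : Z T ≠ 0 := (hZ_pos T hT le_rfl).ne'
  constructor
  · -- forward direction
    intro h
    haveI : Nonempty (Fin K) := ⟨⟨0, by omega⟩⟩
    have hQpos : ∀ (x : ℕ → Fin K → X) (a : ℕ → Fin K → Fin K), 0 < smcQ γ q T K x a := by
      intro x a
      unfold smcQ
      refine mul_pos (Finset.prod_pos fun k _ => hq_pos 1 le_rfl hT _)
        (Finset.prod_pos fun t ht => Finset.prod_pos fun k _ => ?_)
      have htm := Finset.mem_range.1 ht
      refine mul_pos (hq_pos _ (by omega) (by omega) _) (div_pos ?_ ?_)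
      · exact smc_incW_pos hγ_pos hq_pos (by omega) (by omega) _
      · exact Finset.sum_pos (fun l _ => smc_incW_pos hγ_pos hq_pos (by omega) (by omega) _)
          Finset.univ_nonempty
    have hZhat : ∀ (x : ℕ → Fin K → X) (a : ℕ → Fin K → Fin K),
        smcZhat γ q T K x a = Z T := by
      intro x a
      have h1 := h x a
      rw [div_eq_iff hZT] at h1
      exact mul_left_cancel₀ (hQpos x a).ne' h1
    have hconst := smc_incW_const hT hK γ q (Z T) hγ_pos hq_pos hZhat
    obtain ⟨x₀⟩ : Nonempty X := by
      by_contra hne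
      rw [not_nonempty_iff] at hne
      haveI : IsEmpty (Fin T → X) := ⟨fun f => hne.false (f ⟨0, hT⟩)⟩
      have h0 := hZ_def T hT le_rfl
      rw [Measure.eq_zero_of_isEmpty (Measure.pi fun _ : Fin T => μ),
        integral_zero_measure] at h0
      exact (hZ_pos T hT le_rfl).ne' h0.symm
    obtain ⟨d, hdval, hdpos⟩ : ∃ d : ℕ → ℝ,
        (∀ t, t < T → ∀ v : Fin (t + 1) → X, incW γ q (t + 1) v = d t)
          ∧ (∀ t, t < T → 0 < d t) :=
      ⟨fun t => incW γ q (t + 1) (fun _ => x₀),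
        fun t ht v => hconst t ht v _,
        fun t ht => smc_incW_pos hγ_pos hq_pos (by omega) (by omega) _⟩
    -- the first weight
    have hγ1 : ∀ v : Fin 1 → X, γ 1 v = d 0 * q 1 v := by
      intro v
      have h1 : γ 1 v / q 1 v = d 0 := hdval 0 (by omega) v
      rw [← h1, div_mul_cancel₀ _ (hq_pos 1 le_rfl hT v).ne']
    have hsnoc1 : ∀ y : X, (Fin.snoc Fin.elim0 y : Fin (0 + 1) → X) = fun _ => y := by
      intro y
      funext i
      have hi : i = Fin.last 0 := by
        have hval : (i : ℕ) = 0 := by have := i.isLt; omega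
        exact Fin.ext (by rw [hval, Fin.val_last])
      rw [hi, Fin.snoc_last]
    have hq1_int : ∫ y, q 1 (fun _ : Fin 1 => y) ∂μ = 1 := by
      have h0 := hq_norm 0 (by omega) Fin.elim0
      have he : ∀ y : X, q (0 + 1) (Fin.snoc Fin.elim0 y)
          = q (0 + 1) (fun _ : Fin (0 + 1) => y) :=
        fun y => congrArg (q (0 + 1)) (hsnoc1 y)
      simp_rw [he] at h0
      exact h0
    have hd0 : d 0 = Z 1 := by
      have hpi : ∫ v : Fin 1 → X, γ 1 v ∂(Measure.pi fun _ : Fin 1 => μ)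
          = ∫ y : X, γ 1 (fun _ : Fin 1 => y) ∂μ := by
        have mp := measurePreserving_funUnique μ (Fin 1)
        have h2 : ∫ y : X, γ 1 ((MeasurableEquiv.funUnique (Fin 1) X).symm y) ∂μ
            = ∫ v : Fin 1 → X, γ 1 v ∂(Measure.pi fun _ : Fin 1 => μ) :=
          MeasurePreserving.integral_comp' (MeasurePreserving.symm _ mp) (γ 1)
        rw [← h2]
        rfl
      rw [← hZ_def 1 le_rfl hT, hpi]
      have he : ∀ y : X, γ 1 (fun _ : Fin 1 => y) = d 0 * q 1 (fun _ : Fin 1 => y) :=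
        fun y => hγ1 _
      simp_rw [he]
      rw [integral_const_mul, hq1_int, mul_one]
    have hq1 : ∀ v : Fin 1 → X, q 1 v = γ 1 v / Z 1 := by
      intro v
      rw [hγ1 v, hd0, mul_comm, mul_div_assoc, div_self (hZ_pos 1 le_rfl hT).ne', mul_one]
    -- the recursive weights
    have hM' : ∀ m, 1 ≤ m → m + 1 ≤ T → ∀ (p : Fin m → X) (y : X),
        γ (m + 1) (Fin.snoc p y) = d m * γ m p * q (m + 1) (Fin.snoc p y) := by
      intro m hm hmT p y
      obtain ⟨n, rfl⟩ : ∃ n, m = n + 1 := ⟨m - 1, by omega⟩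
      have h1 : γ (n + 2) (Fin.snoc p y)
          / (γ (n + 1) (Fin.init (Fin.snoc p y : Fin (n + 2) → X)) * q (n + 2) (Fin.snoc p y))
            = d (n + 1) :=
        hdval (n + 1) (by omega) (Fin.snoc p y)
      rw [Fin.init_snoc] at h1
      rw [div_eq_iff (mul_pos (hγ_pos (n + 1) (by omega) (by omega) p)
        (hq_pos (n + 2) (by omega) (by omega) _)).ne'] at h1
      show γ (n + 2) (Fin.snoc p y) = d (n + 1) * γ (n + 1) p * q (n + 2) (Fin.snoc p y)
      rw [h1]; ring
    have hqint : ∀ m, m < T → ∀ p : Fin m → X,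
        Integrable (fun y => q (m + 1) (Fin.snoc p y)) μ := by
      intro m hm p
      by_contra hni
      have h0 := hq_norm m hm p
      rw [integral_undef hni] at h0
      norm_num at h0
    have hMarg : ∀ m, 1 ≤ m → m + 1 ≤ T → ∀ p : Fin m → X,
        ∫ y, γ (m + 1) (Fin.snoc p y) ∂μ = d m * γ m p := by
      intro m hm hmT p
      simp_rw [hM' m hm hmT p]
      rw [integral_const_mul, hq_norm m (by omega) p, mul_one]
    have hes : ∀ (n : ℕ) (y : X) (p : Fin n → X),
        (MeasurableEquiv.piFinSuccAbove (fun _ : Fin (n + 1) => X) (Fin.last n)).symm (y, p)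
          = Fin.snoc p y := by
      intro n y p
      rw [MeasurableEquiv.piFinSuccAbove_symm_apply]
      exact Fin.insertNth_last' y p
    have hd_succ : ∀ m, 1 ≤ m → m + 1 ≤ T → d m = Z (m + 1) / Z m := by
      intro m hm hmT
      have hZm := (hZ_pos m hm (by omega)).ne'
      have hfub : Z (m + 1) = d m * Z m := by
        rw [← hZ_def (m + 1) (by omega) hmT, ← hZ_def m hm (by omega)]
        have mp := measurePreserving_piFinSuccAbove (fun _ : Fin (m + 1) => μ) (Fin.last m)
        have hcomp : ∫ z : X × (Fin m → X),
              γ (m + 1) ((MeasurableEquiv.piFinSuccAbove (fun _ : Fin (m + 1) => X)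
                (Fin.last m)).symm z) ∂(μ.prod (Measure.pi fun _ : Fin m => μ))
            = ∫ v, γ (m + 1) v ∂(Measure.pi fun _ : Fin (m + 1) => μ) :=
          MeasurePreserving.integral_comp' (MeasurePreserving.symm _ mp) (γ (m + 1))
        rw [← hcomp]
        have hint : Integrable (fun z : X × (Fin m → X) =>
            γ (m + 1) ((MeasurableEquiv.piFinSuccAbove (fun _ : Fin (m + 1) => X)
              (Fin.last m)).symm z)) (μ.prod (Measure.pi fun _ : Fin m => μ)) :=
          ((MeasurePreserving.symm _ mp).integrable_comp_emb
            (MeasurableEquiv.measurableEmbedding _)).mpr (hγ_int (m + 1) (by omega) hmT)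
        have hswap : ∫ z : X × (Fin m → X),
              γ (m + 1) ((MeasurableEquiv.piFinSuccAbove (fun _ : Fin (m + 1) => X)
                (Fin.last m)).symm z) ∂(μ.prod (Measure.pi fun _ : Fin m => μ))
            = ∫ p : Fin m → X, ∫ y : X,
                γ (m + 1) ((MeasurableEquiv.piFinSuccAbove (fun _ : Fin (m + 1) => X)
                  (Fin.last m)).symm (y, p)) ∂μ ∂(Measure.pi fun _ : Fin m => μ) :=
          integral_prod_symm _ hint
        rw [hswap]
        simp_rw [hes m, hMarg m hm hmT]
        rw [integral_const_mul]
      rw [hfub, mul_div_assoc, div_self hZm, mul_one]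
    have hq2 : ∀ t : ℕ, t + 2 ≤ T → ∀ v : Fin (t + 2) → X,
        q (t + 2) v = γ (t + 2) v / Z (t + 2) / (γ (t + 1) (Fin.init v) / Z (t + 1)) := by
      intro t ht v
      have h1 : γ (t + 2) v / (γ (t + 1) (Fin.init v) * q (t + 2) v) = d (t + 1) :=
        hdval (t + 1) (by omega) v
      rw [hd_succ (t + 1) (by omega) (by omega)] at h1
      rw [show Z (t + 1 + 1) = Z (t + 2) from rfl] at h1
      have g2 := (hγ_pos (t + 2) (by omega) ht v).ne'
      have g1 := (hγ_pos (t + 1) (by omega) (by omega) (Fin.init v)).ne'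
      have hqv := (hq_pos (t + 2) (by omega) ht v).ne'
      have z2 := (hZ_pos (t + 2) (by omega) ht).ne'
      have z1 := (hZ_pos (t + 1) (by omega) (by omega)).ne'
      field_simp at h1 ⊢
      linear_combination -h1
    -- integrability of sections
    have hInt : ∀ s t, 1 ≤ t → t + s ≤ T → ∀ vp : Fin t → X,
        Integrable (fun w : Fin s → X => γ (t + s) (Fin.append vp w))
          (Measure.pi fun _ : Fin s => μ) := by
      intro s
      induction s with
      | zero =>
        intro t ht hts vp
        have hconstf : (fun w : Fin 0 → X => γ (t + 0) (Fin.append vp w))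
            = fun _ : Fin 0 → X => γ t vp := by
          funext w
          have hw : w = Fin.elim0 := funext fun i => i.elim0
          have happ : Fin.append vp w = vp := by
            rw [hw, Fin.append_elim0]
            funext i
            exact congrArg vp (Fin.ext rfl)
          rw [happ]
          rfl
        rw [hconstf]
        haveI : IsProbabilityMeasure (Measure.pi fun _ : Fin 0 => μ) := by
          constructor
          rw [Measure.pi_univ]
          simp
        exact integrable_const _
      | succ s ih =>
        intro t ht hts vp
        have mp := measurePreserving_piFinSuccAbove (fun _ : Fin (s + 1) => μ) (Fin.last s)
        refine ((MeasurePreserving.symm _ mp).integrable_comp_emb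
          (MeasurableEquiv.measurableEmbedding _)).mp ?_
        have hfun : ((fun w : Fin (s + 1) → X => γ (t + (s + 1)) (Fin.append vp w))
              ∘ (MeasurableEquiv.piFinSuccAbove (fun _ : Fin (s + 1) => X) (Fin.last s)).symm)
            = fun z : X × (Fin s → X) => γ (t + s + 1) (Fin.snoc (Fin.append vp z.2) z.1) := by
          funext z
          obtain ⟨y, w⟩ := z
          show γ (t + (s + 1)) (Fin.append vp
            ((MeasurableEquiv.piFinSuccAbove (fun _ : Fin (s + 1) => X)
              (Fin.last s)).symm (y, w))) = _
          rw [hes s y w, Fin.append_snoc]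
          rfl
        rw [hfun]
        have hφ : Measurable (fun z : X × (Fin s → X) =>
            (Fin.snoc (Fin.append vp z.2) z.1 : Fin (t + s + 1) → X)) := by
          refine measurable_pi_iff.mpr fun i => ?_
          refine Fin.lastCases ?_ (fun j => ?_) i
          · simp only [Fin.snoc_last]
            exact measurable_fst
          · simp only [Fin.snoc_castSucc]
            refine Fin.addCases (fun j1 => ?_) (fun j2 => ?_) j
            · simp only [Fin.append_left]
              exact measurable_const
            · simp only [Fin.append_right]
              exact (measurable_pi_apply j2).comp measurable_snd
        have hmeas : AEStronglyMeasurable (fun z : X × (Fin s → X) =>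
            γ (t + s + 1) (Fin.snoc (Fin.append vp z.2) z.1))
            (μ.prod (Measure.pi fun _ : Fin s => μ)) :=
          ((hγ_meas (t + s + 1) (by omega) (by omega)).comp hφ).aestronglyMeasurable
        rw [integrable_prod_iff' hmeas]
        constructor
        · refine Filter.Eventually.of_forall fun w => ?_
          show Integrable (fun y : X => γ (t + s + 1) (Fin.snoc (Fin.append vp w) y)) μ
          have heq : (fun y : X => γ (t + s + 1) (Fin.snoc (Fin.append vp w) y))
              = fun y : X => d (t + s) * γ (t + s) (Fin.append vp w)
                  * q (t + s + 1) (Fin.snoc (Fin.append vp w) y) := by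
            funext y
            exact hM' (t + s) (by omega) (by omega) (Fin.append vp w) y
          rw [heq]
          exact (hqint (t + s) (by omega) _).const_mul _
        · show Integrable (fun w : Fin s → X => ∫ y : X,
              ‖γ (t + s + 1) (Fin.snoc (Fin.append vp w) y)‖ ∂μ)
            (Measure.pi fun _ : Fin s => μ)
          have heq : (fun w : Fin s → X => ∫ y : X,
                ‖γ (t + s + 1) (Fin.snoc (Fin.append vp w) y)‖ ∂μ)
              = fun w : Fin s → X => d (t + s) * γ (t + s) (Fin.append vp w) := by
            funext w
            have h1 : (fun y : X => ‖γ (t + s + 1) (Fin.snoc (Fin.append vp w) y)‖)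
                = fun y : X => d (t + s) * γ (t + s) (Fin.append vp w)
                    * q (t + s + 1) (Fin.snoc (Fin.append vp w) y) := by
              funext y
              rw [Real.norm_eq_abs, abs_of_pos (hγ_pos (t + s + 1) (by omega) (by omega) _)]
              exact hM' (t + s) (by omega) (by omega) (Fin.append vp w) y
            rw [h1, integral_const_mul, hq_norm (t + s) (by omega) (Fin.append vp w), mul_one]
          rw [heq]
          exact (ih t ht (by omega) vp).const_mul _
    -- the marginal identity
    have hClaim : ∀ s t, 1 ≤ t → t + s ≤ T → ∀ vp : Fin t → X,
        ∫ w : Fin s → X, γ (t + s) (Fin.append vp w) ∂(Measure.pi fun _ : Fin s => μ)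
          = Z (t + s) / Z t * γ t vp := by
      intro s
      induction s with
      | zero =>
        intro t ht hts vp
        have hconstf : (fun w : Fin 0 → X => γ (t + 0) (Fin.append vp w))
            = fun _ : Fin 0 → X => γ t vp := by
          funext w
          have hw : w = Fin.elim0 := funext fun i => i.elim0
          have happ : Fin.append vp w = vp := by
            rw [hw, Fin.append_elim0]
            funext i
            exact congrArg vp (Fin.ext rfl)
          rw [happ]
          rfl
        rw [hconstf, integral_const]
        simp only [measureReal_def, Measure.pi_univ]
        rw [show (∏ _i : Fin 0, μ Set.univ) = 1 from by simp, ENNReal.toReal_one, one_smul]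
        show γ t vp = Z t / Z t * γ t vp
        rw [div_self (hZ_pos t ht (by omega)).ne', one_mul]
      | succ s ih =>
        intro t ht hts vp
        have mp := measurePreserving_piFinSuccAbove (fun _ : Fin (s + 1) => μ) (Fin.last s)
        have hcomp : ∫ z : X × (Fin s → X),
              γ (t + s + 1) (Fin.snoc (Fin.append vp z.2) z.1)
                ∂(μ.prod (Measure.pi fun _ : Fin s => μ))
            = ∫ w : Fin (s + 1) → X, γ (t + (s + 1)) (Fin.append vp w)
                ∂(Measure.pi fun _ : Fin (s + 1) => μ) := by
          have h0 : ∫ z : X × (Fin s → X),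
                γ (t + (s + 1)) (Fin.append vp
                  ((MeasurableEquiv.piFinSuccAbove (fun _ : Fin (s + 1) => X)
                    (Fin.last s)).symm z)) ∂(μ.prod (Measure.pi fun _ : Fin s => μ))
              = ∫ w : Fin (s + 1) → X, γ (t + (s + 1)) (Fin.append vp w)
                  ∂(Measure.pi fun _ : Fin (s + 1) => μ) :=
            MeasurePreserving.integral_comp' (MeasurePreserving.symm _ mp)
              (fun w : Fin (s + 1) → X => γ (t + (s + 1)) (Fin.append vp w))
          rw [← h0]
          have hfun : (fun z : X × (Fin s → X) =>
                γ (t + (s + 1)) (Fin.append vp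
                  ((MeasurableEquiv.piFinSuccAbove (fun _ : Fin (s + 1) => X)
                    (Fin.last s)).symm z)))
              = fun z : X × (Fin s → X) =>
                  γ (t + s + 1) (Fin.snoc (Fin.append vp z.2) z.1) := by
            funext z
            obtain ⟨y, w⟩ := z
            show γ (t + (s + 1)) (Fin.append vp
              ((MeasurableEquiv.piFinSuccAbove (fun _ : Fin (s + 1) => X)
                (Fin.last s)).symm (y, w))) = _
            rw [hes s y w, Fin.append_snoc]
            rfl
          rw [hfun]
        have hint2 : Integrable (fun z : X × (Fin s → X) =>
            γ (t + s + 1) (Fin.snoc (Fin.append vp z.2) z.1))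
            (μ.prod (Measure.pi fun _ : Fin s => μ)) := by
          have h2 := hInt (s + 1) t ht hts vp
          have h3 := ((MeasurePreserving.symm _ mp).integrable_comp_emb
            (MeasurableEquiv.measurableEmbedding _)).mpr h2
          refine h3.congr (Filter.Eventually.of_forall fun z => ?_)
          obtain ⟨y, w⟩ := z
          show γ (t + (s + 1)) (Fin.append vp
            ((MeasurableEquiv.piFinSuccAbove (fun _ : Fin (s + 1) => X)
              (Fin.last s)).symm (y, w))) = _
          rw [hes s y w, Fin.append_snoc]
          rfl
        have hswap : ∫ z : X × (Fin s → X),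
              γ (t + s + 1) (Fin.snoc (Fin.append vp z.2) z.1)
                ∂(μ.prod (Measure.pi fun _ : Fin s => μ))
            = ∫ w : Fin s → X, ∫ y : X, γ (t + s + 1) (Fin.snoc (Fin.append vp w) y) ∂μ
                ∂(Measure.pi fun _ : Fin s => μ) :=
          integral_prod_symm _ hint2
        rw [← hcomp, hswap]
        simp_rw [hMarg (t + s) (by omega) (by omega)]
        rw [integral_const_mul, ih t ht (by omega) vp, hd_succ (t + s) (by omega) (by omega)]
        show Z (t + s + 1) / Z (t + s) * (Z (t + s) / Z t * γ t vp)
          = Z (t + s + 1) / Z t * γ t vp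
        have hZts := (hZ_pos (t + s) (by omega) (by omega)).ne'
        have hZt := (hZ_pos t ht (by omega)).ne'
        field_simp
    refine ⟨?_, hq1, hq2⟩
    intro t s ht hts vp
    have hc := hClaim s t ht (by omega) vp
    rw [integral_div, hc]
    have h1 := (hZ_pos t ht (by omega)).ne'
    have h2 := (hZ_pos (t + s) (by omega) (by omega)).ne'
    field_simp
  · -- backward direction
    rintro ⟨h1, h2, h3⟩
    intro x a
    have hzh : smcZhat γ q T K x a = Z T := by
      have hw : ∀ t, t < T → ∀ v : Fin (t + 1) → X,
          incW γ q (t + 1) v = (if t = 0 then Z 1 else Z (t + 1) / Z t) := by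
        intro t ht v
        rcases t with _ | n
        · rw [if_pos rfl]
          have hγv := (hγ_pos 1 le_rfl hT v).ne'
          show γ 1 v / q 1 v = Z 1
          rw [h2 v, div_div_eq_mul_div, mul_comm, mul_div_assoc, div_self hγv, mul_one]
        · rw [if_neg (by omega)]
          show γ (n + 2) v / (γ (n + 1) (Fin.init v) * q (n + 2) v) = Z (n + 2) / Z (n + 1)
          rw [h3 n (by omega) v]
          have g2 := (hγ_pos (n + 2) (by omega) (by omega) v).ne'
          have g1 := (hγ_pos (n + 1) (by omega) (by omega) (Fin.init v)).ne'
          have z2 := (hZ_pos (n + 2) (by omega) (by omega)).ne'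
          have z1 := (hZ_pos (n + 1) (by omega) (by omega)).ne'
          field_simp
      have hprod : ∀ t ∈ Finset.range T,
          ((K : ℝ)⁻¹ * ∑ k : Fin K, incW γ q (t + 1) (traj x a (t + 1) k))
            = (if t = 0 then Z 1 else Z (t + 1) / Z t) := by
        intro t ht
        have hKne : ((K : ℕ) : ℝ) ≠ 0 := Nat.cast_ne_zero.mpr (by omega)
        rw [Finset.sum_congr rfl fun k _ => hw t (Finset.mem_range.1 ht) (traj x a (t + 1) k),
          Finset.sum_const, Finset.card_univ, Fintype.card_fin, nsmul_eq_mul, ← mul_assoc,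
          inv_mul_cancel₀ hKne, one_mul]
      unfold smcZhat
      rw [Finset.prod_congr rfl hprod,
        smc_prod_tele Z T hT (fun t h1' h2' => (hZ_pos t h1' h2').ne')]
    rw [hzh, mul_div_assoc, div_self hZT, mul_one]
end

section
/- (KL decomposition of the SMC evidence lower bound.) Fix integers T ≥ 1 and K ≥ 1, strictly positive unnormalized target densities γ_1, …, γ_T with normalizing constants Z_1, …, Z_T ∈ (0, ∞), and strictly positive normalized proposal densities q_1, …, q_T. Assume (x, a) ↦ Q_SMC(x, a) log Ẑ_SMC(x, a) is integrable with respect to μ^{⊗TK} ⊗ counting measure. Define P_SMC(x, a) = Q_SMC(x, a) · Ẑ_SMC(x, a)/Z_T. Then P_SMC is a probability density on X^{T×K} × {1, …, K}^{(T−1)×K} with respect to μ^{⊗TK} ⊗ counting measure, and ELBO_SMC := Σ_a ∫ Q_SMC(x, a) log Ẑ_SMC(x, a) dμ^{⊗TK}(x) = log Z_T − KL(Q_SMC‖P_SMC). -/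
open MeasureTheory Finset

/-- Extend a particle array `Fin T → Fin K → X` to `ℕ → Fin K → X`; the values beyond time
`T` are irrelevant to `smcQ` and `smcZhat`. -/
def extX {X : Type*} {T K : ℕ} (hT : 0 < T) (xf : Fin T → Fin K → X) : ℕ → Fin K → X :=
  fun t k => if h : t < T then xf ⟨t, h⟩ k else xf ⟨0, hT⟩ k

/-- Extend an ancestor-index array `Fin (T-1) → Fin K → Fin K` to `ℕ → Fin K → Fin K`; the
values beyond time `T - 1` are irrelevant to `smcQ` and `smcZhat`. -/
def extA {T K : ℕ} (af : Fin (T - 1) → Fin K → Fin K) : ℕ → Fin K → Fin K :=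
  fun t k => if h : t < T - 1 then af ⟨t, h⟩ k else k



open MeasureTheory Finset
open scoped ENNReal

namespace SMCproof

variable {Y : Type*} [MeasurableSpace Y]

lemma measurable_snoc_pair {n : ℕ} :
    Measurable (fun p : (Fin n → Y) × Y => (Fin.snoc p.1 p.2 : Fin (n+1) → Y)) := by
  apply measurable_pi_lambda
  intro i
  induction i using Fin.lastCases with
  | last => simpa [Fin.snoc_last] using measurable_snd
  | cast i => simpa [Fin.snoc_castSucc, Function.comp_def] using (measurable_pi_apply i).comp measurable_fst

lemma lintegral_pi_fin_zero (m : Measure Y) [SigmaFinite m] (F : (Fin 0 → Y) → ℝ≥0∞) :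
    ∫⁻ v, F v ∂(Measure.pi fun _ : Fin 0 => m) = F Fin.elim0 := by
  have h : ∀ v : Fin 0 → Y, F v = F Fin.elim0 := fun v => congrArg F (Subsingleton.elim _ _)
  simp_rw [h]
  rw [lintegral_const]
  have : (Measure.pi fun _ : Fin 0 => m) Set.univ = 1 := by
    rw [← Set.pi_univ Set.univ, Measure.pi_pi]
    simp
  rw [this, mul_one]

lemma lintegral_snoc (m : Measure Y) [SigmaFinite m] {n : ℕ}
    (F : (Fin (n+1) → Y) → ℝ≥0∞) (hF : Measurable F) :
    ∫⁻ u, F u ∂(Measure.pi fun _ : Fin (n+1) => m)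
      = ∫⁻ v, ∫⁻ y, F (Fin.snoc v y) ∂m ∂(Measure.pi fun _ : Fin n => m) := by
  have hmp := measurePreserving_piFinSuccAbove (fun _ : Fin (n+1) => m) (Fin.last n)
  set e := MeasurableEquiv.piFinSuccAbove (fun _ : Fin (n+1) => Y) (Fin.last n)
  have h1 : ∫⁻ u, F u ∂(Measure.pi fun _ : Fin (n+1) => m)
      = ∫⁻ p, F (e.symm p) ∂(m.prod (Measure.pi fun _ : Fin n => m)) := by
    rw [← hmp.map_eq, lintegral_map_equiv]
    congr 1; ext u; rw [e.symm_apply_apply]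
  have hsymm : ∀ p : Y × (Fin n → Y), e.symm p = Fin.snoc p.2 p.1 := by
    intro p
    show (Fin.insertNthEquiv (fun _ : Fin (n+1) => Y) (Fin.last n)) p = _
    simp [Fin.insertNthEquiv]
  rw [h1]
  have hme : Measurable fun p : Y × (Fin n → Y) => F (Fin.snoc p.2 p.1) :=
    hF.comp ((measurable_snoc_pair (n := n)).comp (measurable_snd.prodMk measurable_fst))
  have h2 : (fun p : Y × (Fin n → Y) => F (e.symm p)) = fun p => F (Fin.snoc p.2 p.1) := by
    funext p; rw [hsymm]
  rw [h2, lintegral_prod _ hme.aemeasurable]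
  exact lintegral_lintegral_swap (by
    exact (hF.comp ((measurable_snoc_pair (n := n)).comp
      (measurable_snd.prodMk measurable_fst))).aemeasurable)

lemma lintegral_pi_prod (m : Measure Y) [SigmaFinite m] :
    ∀ {n : ℕ} (g : Fin n → Y → ℝ≥0∞), (∀ i, Measurable (g i)) →
      ∫⁻ u : Fin n → Y, ∏ i, g i (u i) ∂(Measure.pi fun _ => m) = ∏ i, ∫⁻ y, g i y ∂m := by
  intro n
  induction n with
  | zero => intro g _; rw [lintegral_pi_fin_zero]; simp
  | succ n ih =>
    intro g hg
    rw [lintegral_snoc m (fun u => ∏ i, g i (u i))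
      (Finset.measurable_prod _ fun i _ => (hg i).comp (measurable_pi_apply i))]
    have h1 : ∀ (v : Fin n → Y) (y : Y),
        (∏ i, g i ((Fin.snoc v y : Fin (n+1) → Y) i)) = (∏ i : Fin n, g i.castSucc (v i)) * g (Fin.last n) y := by
      intro v y
      rw [Fin.prod_univ_castSucc]
      simp [Fin.snoc_castSucc, Fin.snoc_last]
    simp_rw [h1]
    have h2 : ∀ v : Fin n → Y,
        ∫⁻ y, (∏ i : Fin n, g i.castSucc (v i)) * g (Fin.last n) y ∂m
          = (∏ i : Fin n, g i.castSucc (v i)) * ∫⁻ y, g (Fin.last n) y ∂m := by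
      intro v; exact lintegral_const_mul _ (hg _)
    simp_rw [h2]
    rw [lintegral_mul_const _ (Finset.measurable_prod _ fun i _ =>
      (hg i.castSucc).comp (measurable_pi_apply i)), ih _ (fun i => hg i.castSucc),
      Fin.prod_univ_castSucc]

lemma sum_lintegral_prod (m : Measure Y) [SigmaFinite m] {K : ℕ}
    (F : Fin K → Fin K → Y → ℝ≥0∞) (hF : ∀ k a, Measurable (F k a)) :
    ∑ g : Fin K → Fin K, ∫⁻ y : Fin K → Y, ∏ k, F k (g k) (y k) ∂(Measure.pi fun _ => m)
      = ∏ k, ∑ a, ∫⁻ z, F k a z ∂m := by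
  have h1 : ∀ g : Fin K → Fin K,
      ∫⁻ y : Fin K → Y, ∏ k, F k (g k) (y k) ∂(Measure.pi fun _ => m)
        = ∏ k, ∫⁻ z, F k (g k) z ∂m := fun g =>
    lintegral_pi_prod m (fun k => F k (g k)) (fun k => hF k (g k))
  simp_rw [h1]
  exact (Fintype.prod_sum fun k a => ∫⁻ z, F k a z ∂m).symm

end SMCproof
section Sec2

open MeasureTheory Finset ENNReal
namespace SMCproof

variable {X : Type*}

noncomputable def We (γ q : (t : ℕ) → (Fin t → X) → ℝ) (t : ℕ) (v : Fin t → X) : ℝ≥0∞ :=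
  ENNReal.ofReal (incW γ q t v)

lemma traj_congr {K : ℕ} (x x' : ℕ → Fin K → X) (a a' : ℕ → Fin K → Fin K) :
    ∀ (t : ℕ), (∀ s, s < t → x s = x' s) → (∀ s, s + 1 < t → a s = a' s) →
      ∀ k, traj x a t k = traj x' a' t k := by
  intro t
  induction t using Nat.twoStepInduction with
  | zero => intro _ _ k; rfl
  | one => intro hx _ k; funext i; show x 0 k = x' 0 k; rw [hx 0 (by omega)]
  | more t ih1 ih2 =>
    intro hx ha k
    show Fin.snoc _ _ = Fin.snoc _ _
    rw [ha t (by omega), hx (t+1) (by omega),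
      ih2 (fun s hs => hx s (by omega)) (fun s hs => ha s (by omega))]

end SMCproof
end Sec2
section Sec3
open MeasureTheory Finset ENNReal
namespace SMCproof

variable {X : Type*} {K n : ℕ}

lemma extX_snoc_lt (xf : Fin (n+1) → Fin K → X) (y : Fin K → X) (s : ℕ) (hs : s < n+1) :
    extX (Nat.succ_pos (n+1)) (Fin.snoc xf y) s = extX (Nat.succ_pos n) xf s := by
  funext k
  unfold extX
  rw [dif_pos (by omega : s < n+2), dif_pos hs]
  show (Fin.snoc xf y : Fin (n+2) → Fin K → X) (Fin.castSucc ⟨s, hs⟩) k = xf ⟨s, hs⟩ k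
  rw [Fin.snoc_castSucc]

lemma extX_snoc_last (xf : Fin (n+1) → Fin K → X) (y : Fin K → X) :
    extX (Nat.succ_pos (n+1)) (Fin.snoc xf y) (n+1) = y := by
  funext k
  unfold extX
  rw [dif_pos (by omega : n+1 < n+2)]
  show (Fin.snoc xf y : Fin (n+2) → Fin K → X) (Fin.last (n+1)) k = y k
  rw [Fin.snoc_last]

lemma extA_snoc_lt (af : Fin n → Fin K → Fin K) (aL : Fin K → Fin K) (s : ℕ) (hs : s < n) :
    extA (T := n+2) (Fin.snoc af aL) s = extA (T := n+1) af s := by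
  funext k
  unfold extA
  rw [dif_pos (by omega : s < (n+2)-1), dif_pos (by omega : s < (n+1)-1)]
  show (Fin.snoc af aL : Fin (n+1) → Fin K → Fin K) (Fin.castSucc ⟨s, hs⟩) k = af ⟨s, hs⟩ k
  rw [Fin.snoc_castSucc]

lemma extA_snoc_last (af : Fin n → Fin K → Fin K) (aL : Fin K → Fin K) :
    extA (T := n+2) (Fin.snoc af aL) n = aL := by
  funext k
  unfold extA
  rw [dif_pos (by omega : n < (n+2)-1)]
  show (Fin.snoc af aL : Fin (n+1) → Fin K → Fin K) (Fin.last n) k = aL k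
  rw [Fin.snoc_last]

lemma traj_snoc_lt (xf : Fin (n+1) → Fin K → X) (af : Fin n → Fin K → Fin K)
    (y : Fin K → X) (aL : Fin K → Fin K) (t : ℕ) (ht : t ≤ n+1) (k : Fin K) :
    traj (extX (Nat.succ_pos (n+1)) (Fin.snoc xf y)) (extA (T := n+2) (Fin.snoc af aL)) t k
      = traj (extX (Nat.succ_pos n) xf) (extA (T := n+1) af) t k :=
  traj_congr _ _ _ _ t (fun s hs => extX_snoc_lt xf y s (by omega))
    (fun s hs => extA_snoc_lt af aL s (by omega)) k

lemma traj_snoc_top (xf : Fin (n+1) → Fin K → X) (af : Fin n → Fin K → Fin K)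
    (y : Fin K → X) (aL : Fin K → Fin K) (k : Fin K) :
    traj (extX (Nat.succ_pos (n+1)) (Fin.snoc xf y)) (extA (T := n+2) (Fin.snoc af aL)) (n+2) k
      = Fin.snoc (traj (extX (Nat.succ_pos n) xf) (extA (T := n+1) af) (n+1) (aL k)) (y k) := by
  simp only [traj]
  rw [extA_snoc_last, extX_snoc_last, traj_snoc_lt xf af y aL (n+1) le_rfl]

end SMCproof
end Sec3
section Sec4
open MeasureTheory Finset ENNReal
namespace SMCproof

variable {X : Type*} {T K : ℕ} {γ q : (t : ℕ) → (Fin t → X) → ℝ}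

section Pos
variable (hγ_pos : ∀ t, 1 ≤ t → t ≤ T → ∀ v : Fin t → X, 0 < γ t v)
  (hq_pos : ∀ t, 1 ≤ t → t ≤ T → ∀ v : Fin t → X, 0 < q t v)
include hγ_pos hq_pos

lemma incW_pos (t : ℕ) (h1 : 1 ≤ t) (h2 : t ≤ T) (v : Fin t → X) : 0 < incW γ q t v := by
  match t, h1 with
  | 1, _ =>
    exact div_pos (hγ_pos 1 le_rfl h2 v) (hq_pos 1 le_rfl h2 v)
  | (t+2), _ =>
    exact div_pos (hγ_pos _ (by omega) h2 v)
      (mul_pos (hγ_pos _ (by omega) (by omega) _) (hq_pos _ (by omega) h2 v))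

lemma We_pos (t : ℕ) (h1 : 1 ≤ t) (h2 : t ≤ T) (v : Fin t → X) : 0 < We γ q t v :=
  ENNReal.ofReal_pos.mpr (incW_pos hγ_pos hq_pos t h1 h2 v)

omit hγ_pos hq_pos in
lemma We_ne_top (t : ℕ) (v : Fin t → X) : We γ q t v ≠ ⊤ := ENNReal.ofReal_ne_top

lemma sumWe_pos (hK : 0 < K) (t : ℕ) (h1 : 1 ≤ t) (h2 : t ≤ T)
    (τ : Fin K → Fin t → X) : 0 < ∑ l, incW γ q t (τ l) :=
  Finset.sum_pos (fun l _ => incW_pos hγ_pos hq_pos t h1 h2 (τ l))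
    (univ_nonempty_iff.mpr ⟨⟨0, hK⟩⟩)

lemma smcQ_pos (hK : 0 < K) {T' : ℕ} (h1 : 1 ≤ T) (h2 : T' ≤ T)
    (x : ℕ → Fin K → X) (a : ℕ → Fin K → Fin K) : 0 < smcQ γ q T' K x a := by
  refine mul_pos (Finset.prod_pos fun k _ => hq_pos 1 le_rfl h1 _) ?_
  refine Finset.prod_pos fun t ht => Finset.prod_pos fun k _ => ?_
  have ht' : t + 2 ≤ T' := by have := mem_range.mp ht; omega
  refine mul_pos (hq_pos _ (by omega) (by omega) _) (div_pos
    (incW_pos hγ_pos hq_pos _ (by omega) (by omega) _) ?_)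
  exact sumWe_pos hγ_pos hq_pos hK _ (by omega) (by omega) _

lemma smcZhat_pos (hK : 0 < K) {T' : ℕ} (h2 : T' ≤ T)
    (x : ℕ → Fin K → X) (a : ℕ → Fin K → Fin K) : 0 < smcZhat γ q T' K x a := by
  refine Finset.prod_pos fun t ht => mul_pos (by positivity) ?_
  have ht' : t + 1 ≤ T' := by have := mem_range.mp ht; omega
  exact sumWe_pos hγ_pos hq_pos hK _ (by omega) (by omega) _

end Pos

section Meas
variable [MeasurableSpace X]
variable (hγ_meas : ∀ t, 1 ≤ t → t ≤ T → Measurable (γ t))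
  (hq_meas : ∀ t, 1 ≤ t → t ≤ T → Measurable (q t))
include hγ_meas hq_meas in

lemma measurable_incW (t : ℕ) (h1 : 1 ≤ t) (h2 : t ≤ T) : Measurable (incW γ q t) := by
  match t, h1 with
  | 1, _ => exact (hγ_meas 1 le_rfl h2).div (hq_meas 1 le_rfl h2)
  | (t+2), _ =>
    have hinit : Measurable (Fin.init : (Fin (t+2) → X) → Fin (t+1) → X) :=
      measurable_pi_lambda _ fun i => measurable_pi_apply i.castSucc
    exact (hγ_meas _ (by omega) h2).div
      (((hγ_meas (t+1) (by omega) (by omega)).comp hinit).mul (hq_meas _ (by omega) h2))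

lemma measurable_extX_apply {m : ℕ} (h : 0 < m) (s : ℕ) (k : Fin K) :
    Measurable fun xf : Fin m → Fin K → X => extX h xf s k := by
  unfold extX
  by_cases hc : s < m
  · simp only [hc, dif_pos]
    exact (measurable_pi_apply k).comp (measurable_pi_apply _)
  · simp only [hc, dif_neg, not_false_iff]
    exact (measurable_pi_apply k).comp (measurable_pi_apply _)

lemma measurable_traj_ext {m : ℕ} (h : 0 < m) (a : ℕ → Fin K → Fin K) (t : ℕ) :
    ∀ k, Measurable fun xf : Fin m → Fin K → X => traj (extX h xf) a t k := by
  induction t using Nat.twoStepInduction with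
  | zero => intro k; exact measurable_const
  | one => intro k; exact measurable_pi_lambda _ fun _ => measurable_extX_apply h 0 k
  | more t ih1 ih2 =>
    intro k
    have heq : (fun xf : Fin m → Fin K → X => traj (extX h xf) a (t+2) k)
        = (fun p : (Fin (t+1) → X) × X => (Fin.snoc p.1 p.2 : Fin (t+2) → X)) ∘
          (fun xf => (traj (extX h xf) a (t+1) (a t k), extX h xf (t+1) k)) := by
      funext xf; simp only [traj, Function.comp]
    rw [heq]
    exact measurable_snoc_pair.comp ((ih2 (a t k)).prodMk (measurable_extX_apply h (t+1) k))

end Meas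

end SMCproof
end Sec4
section Sec5
open MeasureTheory Finset ENNReal
namespace SMCproof
set_option linter.unusedSectionVars false

variable {X : Type*} {T K : ℕ} {γ q : (t : ℕ) → (Fin t → X) → ℝ}

section Meas2
variable [MeasurableSpace X]
variable (hγ_meas : ∀ t, 1 ≤ t → t ≤ T → Measurable (γ t))
  (hq_meas : ∀ t, 1 ≤ t → t ≤ T → Measurable (q t))
include hγ_meas hq_meas

lemma measurable_smcQ_ext (hT : 1 ≤ T) {T' : ℕ} (hT' : T' ≤ T) {m : ℕ} (h : 0 < m)
    (a : ℕ → Fin K → Fin K) :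
    Measurable fun xf : Fin m → Fin K → X => smcQ γ q T' K (extX h xf) a := by
  unfold smcQ
  refine Measurable.mul ?_ ?_
  · exact Finset.measurable_prod _ fun k _ =>
      (hq_meas 1 le_rfl hT).comp (measurable_traj_ext h a 1 k)
  · refine Finset.measurable_prod _ fun t ht => Finset.measurable_prod _ fun k _ => ?_
    have ht' : t + 2 ≤ T' := by have := mem_range.mp ht; omega
    refine Measurable.mul
      ((hq_meas _ (by omega) (by omega)).comp (measurable_traj_ext h a _ k)) ?_
    refine Measurable.div
      ((measurable_incW hγ_meas hq_meas _ (by omega) (by omega)).comp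
        (measurable_traj_ext h a _ _)) ?_
    exact Finset.measurable_sum _ fun l _ =>
      (measurable_incW hγ_meas hq_meas _ (by omega) (by omega)).comp
        (measurable_traj_ext h a _ _)

lemma measurable_smcZhat_ext {T' : ℕ} (hT' : T' ≤ T) {m : ℕ} (h : 0 < m)
    (a : ℕ → Fin K → Fin K) :
    Measurable fun xf : Fin m → Fin K → X => smcZhat γ q T' K (extX h xf) a := by
  unfold smcZhat
  refine Finset.measurable_prod _ fun t ht => Measurable.const_mul ?_ _
  have ht' : t + 1 ≤ T' := by have := mem_range.mp ht; omega
  exact Finset.measurable_sum _ fun l _ =>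
    (measurable_incW hγ_meas hq_meas _ (by omega) (by omega)).comp
      (measurable_traj_ext h a _ _)

lemma measurable_We_traj_ext {T' : ℕ} (h1 : 1 ≤ T') (hT' : T' ≤ T) {m : ℕ} (h : 0 < m)
    (a : ℕ → Fin K → Fin K) (k : Fin K) :
    Measurable fun xf : Fin m → Fin K → X => We γ q T' (traj (extX h xf) a T' k) :=
  ENNReal.measurable_ofReal.comp ((measurable_incW hγ_meas hq_meas _ h1 hT').comp
    (measurable_traj_ext h a _ _))

end Meas2

section Conv
variable (hγ_pos : ∀ t, 1 ≤ t → t ≤ T → ∀ v : Fin t → X, 0 < γ t v)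
  (hq_pos : ∀ t, 1 ≤ t → t ≤ T → ∀ v : Fin t → X, 0 < q t v)
include hγ_pos hq_pos

lemma ofReal_smcQ_one (hT : 1 ≤ T) (x : ℕ → Fin K → X) (a : ℕ → Fin K → Fin K) :
    ENNReal.ofReal (smcQ γ q 1 K x a) = ∏ k : Fin K, ENNReal.ofReal (q 1 (traj x a 1 k)) := by
  unfold smcQ
  rw [show (1:ℕ) - 1 = 0 from rfl, range_zero, prod_empty, mul_one,
    ENNReal.ofReal_prod_of_nonneg fun k _ => (hq_pos 1 le_rfl hT _).le]

omit hγ_pos hq_pos in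
lemma ofReal_smcZhat_zero (x : ℕ → Fin K → X) (a : ℕ → Fin K → Fin K) :
    ENNReal.ofReal (smcZhat γ q 0 K x a) = 1 := by
  unfold smcZhat; rw [range_zero, prod_empty, ENNReal.ofReal_one]

lemma ofReal_smcQ_succ (hK : 0 < K) (n : ℕ) (hn : n + 2 ≤ T)
    (x : ℕ → Fin K → X) (a : ℕ → Fin K → Fin K) :
    ENNReal.ofReal (smcQ γ q (n+2) K x a)
      = ENNReal.ofReal (smcQ γ q (n+1) K x a) *
        ∏ k : Fin K, ENNReal.ofReal (q (n+2) (traj x a (n+2) k)) *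
          (We γ q (n+1) (traj x a (n+1) (a n k)) /
            ∑ l : Fin K, We γ q (n+1) (traj x a (n+1) l)) := by
  have hsplit : smcQ γ q (n+2) K x a = smcQ γ q (n+1) K x a *
      ∏ k : Fin K, q (n+2) (traj x a (n+2) k) *
        (incW γ q (n+1) (traj x a (n+1) (a n k)) /
          ∑ l : Fin K, incW γ q (n+1) (traj x a (n+1) l)) := by
    unfold smcQ
    rw [show (n+2) - 1 = n + 1 from rfl, show (n+1) - 1 = n from rfl, prod_range_succ, mul_assoc]
  have hterm : ∀ k : Fin K, 0 ≤ q (n+2) (traj x a (n+2) k) *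
      (incW γ q (n+1) (traj x a (n+1) (a n k)) /
        ∑ l : Fin K, incW γ q (n+1) (traj x a (n+1) l)) := by
    intro k
    refine mul_nonneg (hq_pos _ (by omega) hn _).le (div_nonneg
      (incW_pos hγ_pos hq_pos _ (by omega) (by omega) _).le ?_)
    exact (sumWe_pos hγ_pos hq_pos hK _ (by omega) (by omega) _).le
  rw [hsplit, ENNReal.ofReal_mul ((smcQ_pos hγ_pos hq_pos hK (by omega) (by omega) x a).le),
    ENNReal.ofReal_prod_of_nonneg fun k _ => hterm k]
  congr 1
  refine Finset.prod_congr rfl fun k _ => ?_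
  rw [ENNReal.ofReal_mul (hq_pos _ (by omega) hn _).le,
    ENNReal.ofReal_div_of_pos (sumWe_pos hγ_pos hq_pos hK _ (by omega) (by omega) _),
    ENNReal.ofReal_sum_of_nonneg fun l _ => (incW_pos hγ_pos hq_pos _ (by omega) (by omega) _).le]
  rfl

lemma ofReal_smcZhat_succ (hK : 0 < K) (n : ℕ) (hn : n + 1 ≤ T)
    (x : ℕ → Fin K → X) (a : ℕ → Fin K → Fin K) :
    ENNReal.ofReal (smcZhat γ q (n+1) K x a)
      = ENNReal.ofReal (smcZhat γ q n K x a) *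
        ((K : ℝ≥0∞)⁻¹ * ∑ k : Fin K, We γ q (n+1) (traj x a (n+1) k)) := by
  unfold smcZhat
  rw [prod_range_succ]
  rw [ENNReal.ofReal_mul (Finset.prod_nonneg fun t ht => ?_)]
  · congr 1
    rw [ENNReal.ofReal_mul (by positivity),
      ENNReal.ofReal_inv_of_pos (by exact_mod_cast hK), ENNReal.ofReal_natCast,
      ENNReal.ofReal_sum_of_nonneg fun l _ =>
        (incW_pos hγ_pos hq_pos _ (by omega) (by omega) _).le]
    rfl
  · have ht' : t + 1 ≤ n := by have := mem_range.mp ht; omega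
    refine mul_nonneg (by positivity) ?_
    exact (sumWe_pos hγ_pos hq_pos hK _ (by omega) (by omega) _).le

lemma q_mul_We_one (hT : 1 ≤ T) (v : Fin 1 → X) :
    ENNReal.ofReal (q 1 v) * We γ q 1 v = ENNReal.ofReal (γ 1 v) := by
  unfold We
  rw [← ENNReal.ofReal_mul (hq_pos 1 le_rfl hT v).le]
  congr 1
  show q 1 v * (γ 1 v / q 1 v) = γ 1 v
  rw [mul_div_cancel₀ _ (hq_pos 1 le_rfl hT v).ne']

lemma q_mul_We_succ (n : ℕ) (hn : n + 2 ≤ T) (v : Fin (n+2) → X) :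
    ENNReal.ofReal (q (n+2) v) * We γ q (n+2) v
      = ENNReal.ofReal (γ (n+2) v / γ (n+1) (Fin.init v)) := by
  unfold We
  rw [← ENNReal.ofReal_mul (hq_pos _ (by omega) hn v).le]
  congr 1
  show q (n+2) v * (γ (n+2) v / (γ (n+1) (Fin.init v) * q (n+2) v)) = _
  have h1 : q (n+2) v ≠ 0 := (hq_pos _ (by omega) hn v).ne'
  have h2 : γ (n+1) (Fin.init v) ≠ 0 := (hγ_pos _ (by omega) (by omega) _).ne'
  field_simp

end Conv

end SMCproof
end Sec5
section Sec6
open MeasureTheory Finset ENNReal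
namespace SMCproof
set_option linter.unusedSectionVars false

variable {Y : Type*} [MeasurableSpace Y]

lemma measurable_snoc_point {n : ℕ} (u : Fin n → Y) :
    Measurable (fun z : Y => (Fin.snoc u z : Fin (n+1) → Y)) :=
  measurable_snoc_pair.comp (measurable_const.prodMk measurable_id)

lemma snoc_elim0 (z : Y) : (Fin.snoc (Fin.elim0 : Fin 0 → Y) z : Fin 1 → Y) = fun _ => z := by
  funext i
  have hi : i = Fin.last 0 := by
    have := i.isLt
    exact Fin.ext (by omega)
  rw [hi, Fin.snoc_last]

lemma lintegral_fin_one (m : Measure Y) [SigmaFinite m] (F : (Fin 1 → Y) → ℝ≥0∞)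
    (hF : Measurable F) :
    ∫⁻ v, F v ∂(Measure.pi fun _ : Fin 1 => m) = ∫⁻ z, F (fun _ => z) ∂m := by
  rw [lintegral_snoc m F hF, lintegral_pi_fin_zero]
  refine lintegral_congr fun z => ?_
  rw [snoc_elim0]

lemma prod_mul_sum_ite {R : Type*} [CommSemiring R] {K : ℕ} (Dv Ev : Fin K → R) :
    (∏ k, Dv k) * (∑ k, Ev k) = ∑ k0, ∏ k, Dv k * (if k = k0 then Ev k else 1) := by
  rw [Finset.mul_sum]
  refine Finset.sum_congr rfl fun k0 _ => ?_
  rw [Finset.prod_mul_distrib, Finset.prod_ite_eq' univ k0 Ev, if_pos (mem_univ k0)]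

variable {X : Type*} [MeasurableSpace X] {T K : ℕ} {γ q : (t : ℕ) → (Fin t → X) → ℝ}
variable {μ : Measure X} [SigmaFinite μ]

section IntLemmas
variable (hγ_pos : ∀ t, 1 ≤ t → t ≤ T → ∀ v : Fin t → X, 0 < γ t v)
  (hq_pos : ∀ t, 1 ≤ t → t ≤ T → ∀ v : Fin t → X, 0 < q t v)
  (hq_norm : ∀ t < T, ∀ vp : Fin t → X, ∫ y, q (t + 1) (Fin.snoc vp y) ∂μ = 1)

include hq_pos hq_norm in
lemma lintegral_ofReal_q (t : ℕ) (ht : t < T) (vp : Fin t → X) :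
    ∫⁻ z, ENNReal.ofReal (q (t+1) (Fin.snoc vp z)) ∂μ = 1 := by
  have hi : Integrable (fun z => q (t+1) (Fin.snoc vp z)) μ := by
    by_contra hni
    have h1 := hq_norm t ht vp
    rw [integral_undef hni] at h1
    exact one_ne_zero h1.symm
  rw [← ofReal_integral_eq_lintegral_ofReal hi
    (ae_of_all _ fun z => (hq_pos (t+1) (by omega) (by omega) _).le), hq_norm t ht vp,
    ENNReal.ofReal_one]

variable (hK : 0 < K)

include hγ_pos hq_pos hK in
lemma sumWeE_pos (t : ℕ) (h1 : 1 ≤ t) (h2 : t ≤ T) (τ : Fin K → Fin t → X) :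
    0 < ∑ l, We γ q t (τ l) :=
  by
  rw [pos_iff_ne_zero]
  intro h
  exact (We_pos hγ_pos hq_pos t h1 h2 (τ ⟨0, hK⟩)).ne'
    (Finset.sum_eq_zero_iff.mp h ⟨0, hK⟩ (mem_univ _))

omit hγ_pos hq_pos hq_norm hK in
lemma sumWeE_ne_top (t : ℕ) (τ : Fin K → Fin t → X) :
    (∑ l, We γ q t (τ l)) ≠ ⊤ := by
  refine (ENNReal.sum_lt_top.mpr fun l _ => ?_).ne
  exact ENNReal.ofReal_lt_top

include hγ_pos hq_pos hq_norm hK in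
lemma sum_lintegral_D (n : ℕ) (hn : n + 2 ≤ T) (τ : Fin K → (Fin (n+1) → X)) :
    ∑ a : Fin K, ∫⁻ z, ENNReal.ofReal (q (n+2) (Fin.snoc (τ a) z)) *
        (We γ q (n+1) (τ a) / ∑ l, We γ q (n+1) (τ l)) ∂μ = 1 := by
  have hterm : ∀ a : Fin K, ∫⁻ z, ENNReal.ofReal (q (n+2) (Fin.snoc (τ a) z)) *
      (We γ q (n+1) (τ a) / ∑ l, We γ q (n+1) (τ l)) ∂μ
        = We γ q (n+1) (τ a) / ∑ l, We γ q (n+1) (τ l) := by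
    intro a
    rw [lintegral_mul_const' _ _
      ((ENNReal.div_lt_top (We_ne_top _ _) (sumWeE_pos hγ_pos hq_pos hK _ (by omega) (by omega) τ).ne').ne),
      lintegral_ofReal_q hq_pos hq_norm (n+1) (by omega) (τ a), one_mul]
  simp_rw [hterm, ENNReal.div_eq_inv_mul, ← Finset.mul_sum]
  exact ENNReal.inv_mul_cancel (sumWeE_pos hγ_pos hq_pos hK _ (by omega) (by omega) τ).ne'
    (sumWeE_ne_top _ τ)

include hγ_pos hq_pos hK in
lemma sum_lintegral_DE (n : ℕ) (hn : n + 2 ≤ T) (τ : Fin K → (Fin (n+1) → X))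
    (f : (Fin (n+2) → X) → ℝ≥0∞) (hf : Measurable f) :
    ∑ a : Fin K, ∫⁻ z, (ENNReal.ofReal (q (n+2) (Fin.snoc (τ a) z)) *
        (We γ q (n+1) (τ a) / ∑ l, We γ q (n+1) (τ l))) *
        (We γ q (n+2) (Fin.snoc (τ a) z) * f (Fin.snoc (τ a) z)) ∂μ
      = (∑ a : Fin K, We γ q (n+1) (τ a) *
          (∫⁻ z, ENNReal.ofReal (γ (n+2) (Fin.snoc (τ a) z) / γ (n+1) (τ a)) *
            f (Fin.snoc (τ a) z) ∂μ)) / (∑ l, We γ q (n+1) (τ l)) := by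
  have hS0 := (sumWeE_pos hγ_pos hq_pos hK (n+1) (by omega) (by omega) τ).ne'
  have hterm : ∀ a : Fin K, ∫⁻ z, (ENNReal.ofReal (q (n+2) (Fin.snoc (τ a) z)) *
      (We γ q (n+1) (τ a) / ∑ l, We γ q (n+1) (τ l))) *
      (We γ q (n+2) (Fin.snoc (τ a) z) * f (Fin.snoc (τ a) z)) ∂μ
        = (We γ q (n+1) (τ a) / ∑ l, We γ q (n+1) (τ l)) *
          ∫⁻ z, ENNReal.ofReal (γ (n+2) (Fin.snoc (τ a) z) / γ (n+1) (τ a)) *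
            f (Fin.snoc (τ a) z) ∂μ := by
    intro a
    rw [← lintegral_const_mul' _ _
      ((ENNReal.div_lt_top (We_ne_top _ _) hS0).ne)]
    congr 1
    funext z
    have hcollapse : ENNReal.ofReal (q (n+2) (Fin.snoc (τ a) z)) *
        We γ q (n+2) (Fin.snoc (τ a) z)
          = ENNReal.ofReal (γ (n+2) (Fin.snoc (τ a) z) / γ (n+1) (τ a)) := by
      rw [q_mul_We_succ hγ_pos hq_pos n hn, Fin.init_snoc]
    calc (ENNReal.ofReal (q (n+2) (Fin.snoc (τ a) z)) *
          (We γ q (n+1) (τ a) / ∑ l, We γ q (n+1) (τ l))) *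
          (We γ q (n+2) (Fin.snoc (τ a) z) * f (Fin.snoc (τ a) z))
        = (We γ q (n+1) (τ a) / ∑ l, We γ q (n+1) (τ l)) *
          ((ENNReal.ofReal (q (n+2) (Fin.snoc (τ a) z)) * We γ q (n+2) (Fin.snoc (τ a) z)) *
            f (Fin.snoc (τ a) z)) := by ring
      _ = _ := by rw [hcollapse]
  simp_rw [hterm]
  calc ∑ a : Fin K, (We γ q (n+1) (τ a) / ∑ l, We γ q (n+1) (τ l)) *
        ∫⁻ z, ENNReal.ofReal (γ (n+2) (Fin.snoc (τ a) z) / γ (n+1) (τ a)) *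
          f (Fin.snoc (τ a) z) ∂μ
      = ∑ a : Fin K, (∑ l, We γ q (n+1) (τ l))⁻¹ * (We γ q (n+1) (τ a) *
          ∫⁻ z, ENNReal.ofReal (γ (n+2) (Fin.snoc (τ a) z) / γ (n+1) (τ a)) *
            f (Fin.snoc (τ a) z) ∂μ) := by
        refine Finset.sum_congr rfl fun a _ => ?_
        rw [ENNReal.div_eq_inv_mul, mul_assoc]
    _ = _ := by rw [← Finset.mul_sum, ← ENNReal.div_eq_inv_mul]

end IntLemmas
end SMCproof
end Sec6
section Sec7
open MeasureTheory Finset ENNReal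
namespace SMCproof
set_option linter.unusedSectionVars false

variable {X : Type*} {T K n : ℕ} {γ q : (t : ℕ) → (Fin t → X) → ℝ}

lemma smcQ_snoc (xf₀ : Fin (n+1) → Fin K → X) (af₀ : Fin n → Fin K → Fin K)
    (y : Fin K → X) (aL : Fin K → Fin K) :
    smcQ γ q (n+1) K (extX (Nat.succ_pos (n+1)) (Fin.snoc xf₀ y))
        (extA (T := n+2) (Fin.snoc af₀ aL))
      = smcQ γ q (n+1) K (extX (Nat.succ_pos n) xf₀) (extA (T := n+1) af₀) := by
  unfold smcQ
  refine congrArg₂ (· * ·) ?_ ?_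
  · exact Finset.prod_congr rfl fun k _ => by rw [traj_snoc_lt xf₀ af₀ y aL 1 (by omega)]
  · refine Finset.prod_congr rfl fun t ht => Finset.prod_congr rfl fun k _ => ?_
    have ht' : t < n := by have := mem_range.mp ht; omega
    rw [traj_snoc_lt xf₀ af₀ y aL (t+2) (by omega), extA_snoc_lt af₀ aL t ht',
      traj_snoc_lt xf₀ af₀ y aL (t+1) (by omega)]
    congr 2
    exact Finset.sum_congr rfl fun l _ => by
      rw [traj_snoc_lt xf₀ af₀ y aL (t+1) (by omega)]

lemma smcZhat_snoc {m : ℕ} (hm : m ≤ n+1) (xf₀ : Fin (n+1) → Fin K → X)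
    (af₀ : Fin n → Fin K → Fin K) (y : Fin K → X) (aL : Fin K → Fin K) :
    smcZhat γ q m K (extX (Nat.succ_pos (n+1)) (Fin.snoc xf₀ y))
        (extA (T := n+2) (Fin.snoc af₀ aL))
      = smcZhat γ q m K (extX (Nat.succ_pos n) xf₀) (extA (T := n+1) af₀) := by
  unfold smcZhat
  refine Finset.prod_congr rfl fun t ht => ?_
  have ht' : t < m := mem_range.mp ht
  congr 1
  exact Finset.sum_congr rfl fun l _ => by
    rw [traj_snoc_lt xf₀ af₀ y aL (t+1) (by omega)]

lemma traj_ext_one {m : ℕ} (h : 0 < m) (xf : Fin m → Fin K → X)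
    (a : ℕ → Fin K → Fin K) (k : Fin K) :
    traj (extX h xf) a 1 k = fun _ : Fin 1 => xf ⟨0, h⟩ k := by
  funext i
  show extX h xf 0 k = _
  unfold extX
  rw [dif_pos h]

lemma sum_snoc_eq {κ : Type*} [Fintype κ] [DecidableEq κ] {M : Type*} [AddCommMonoid M]
    (G : (Fin (n+1) → κ) → M) :
    ∑ af, G af = ∑ af₀ : Fin n → κ, ∑ aL : κ, G (Fin.snoc af₀ aL) := by
  rw [← Equiv.sum_comp (Fin.snocEquiv (fun _ => κ)) G, Fintype.sum_prod_type, Finset.sum_comm]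
  rfl

end SMCproof
end Sec7
section Sec8
open MeasureTheory Finset ENNReal
namespace SMCproof
set_option linter.unusedSectionVars false

variable {X : Type*} [MeasurableSpace X] {μ : Measure X} [SigmaFinite μ]
variable {T K : ℕ} {γ q : (t : ℕ) → (Fin t → X) → ℝ}
variable (hK : 0 < K)
  (hγ_meas : ∀ t, 1 ≤ t → t ≤ T → Measurable (γ t))
  (hγ_pos : ∀ t, 1 ≤ t → t ≤ T → ∀ v : Fin t → X, 0 < γ t v)
  (hq_meas : ∀ t, 1 ≤ t → t ≤ T → Measurable (q t))
  (hq_pos : ∀ t, 1 ≤ t → t ≤ T → ∀ v : Fin t → X, 0 < q t v)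
  (hq_norm : ∀ t < T, ∀ vp : Fin t → X, ∫ y, q (t + 1) (Fin.snoc vp y) ∂μ = 1)

include hK hγ_meas hγ_pos hq_meas hq_pos hq_norm

/-- Normalization of the SMC sampling density. -/
lemma key2 : ∀ n : ℕ, n + 1 ≤ T →
    ∑ af : Fin n → Fin K → Fin K,
      ∫⁻ xf : Fin (n+1) → Fin K → X,
        ENNReal.ofReal (smcQ γ q (n+1) K (extX (Nat.succ_pos n) xf) (extA (T := n+1) af))
        ∂(Measure.pi fun _ : Fin (n+1) => Measure.pi fun _ : Fin K => μ) = 1 := by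
  intro n
  induction n with
  | zero =>
    intro hn
    rw [Fintype.sum_unique]
    have h1 : ∀ xf : Fin 1 → Fin K → X,
        ENNReal.ofReal (smcQ γ q 1 K (extX (Nat.succ_pos 0) xf)
            (extA (T := 1) (default : Fin 0 → Fin K → Fin K)))
          = ∏ k : Fin K, ENNReal.ofReal (q 1 (fun _ : Fin 1 => xf ⟨0, Nat.succ_pos 0⟩ k)) := by
      intro xf
      rw [ofReal_smcQ_one hγ_pos hq_pos hn]
      exact Finset.prod_congr rfl fun k _ => by rw [traj_ext_one]
    simp_rw [h1]
    have main : (∫⁻ xf : Fin 1 → Fin K → X,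
        ∏ k : Fin K, ENNReal.ofReal (q 1 (fun _ : Fin 1 => xf ⟨0, Nat.succ_pos 0⟩ k))
        ∂(Measure.pi fun _ : Fin 1 => Measure.pi fun _ : Fin K => μ)) = 1 := by
      rw [lintegral_fin_one (Measure.pi fun _ : Fin K => μ)
        (fun xf : Fin 1 → Fin K → X =>
          ∏ k : Fin K, ENNReal.ofReal (q 1 (fun _ : Fin 1 => xf ⟨0, Nat.succ_pos 0⟩ k)))
        (Finset.measurable_prod _ fun k _ =>
          ENNReal.measurable_ofReal.comp ((hq_meas 1 le_rfl hn).comp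
            (measurable_pi_lambda _ fun _ =>
              (measurable_pi_apply k).comp (measurable_pi_apply _))))]
      have h2 : ∀ z : Fin K → X, (∏ k : Fin K, ENNReal.ofReal
          (q 1 (fun _ : Fin 1 => (fun _ : Fin 1 => z) ⟨0, Nat.succ_pos 0⟩ k)))
            = ∏ k : Fin K, ENNReal.ofReal (q 1 (Fin.snoc (Fin.elim0 : Fin 0 → X) (z k))) := by
        intro z
        exact Finset.prod_congr rfl fun k _ => by rw [snoc_elim0]
      simp_rw [h2]
      rw [lintegral_pi_prod μ
        (fun (_ : Fin K) (z : X) => ENNReal.ofReal (q 1 (Fin.snoc (Fin.elim0 : Fin 0 → X) z)))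
        (fun k => ENNReal.measurable_ofReal.comp
          ((hq_meas 1 le_rfl hn).comp (measurable_snoc_point Fin.elim0)))]
      exact Finset.prod_eq_one fun k _ => lintegral_ofReal_q hq_pos hq_norm 0 hn Fin.elim0
    exact main
  | succ n ih =>
    intro hn2
    have hn1 : n + 1 ≤ T := by omega
    rw [sum_snoc_eq]
    have hstep : ∀ af₀ : Fin n → Fin K → Fin K,
        ∑ aL : Fin K → Fin K,
          ∫⁻ xf : Fin (n+2) → Fin K → X,
            ENNReal.ofReal (smcQ γ q (n+2) K (extX (Nat.succ_pos (n+1)) xf)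
              (extA (T := n+2) (Fin.snoc af₀ aL)))
            ∂(Measure.pi fun _ : Fin (n+2) => Measure.pi fun _ : Fin K => μ)
        = ∫⁻ xf₀ : Fin (n+1) → Fin K → X,
            ENNReal.ofReal (smcQ γ q (n+1) K (extX (Nat.succ_pos n) xf₀) (extA (T := n+1) af₀))
            ∂(Measure.pi fun _ : Fin (n+1) => Measure.pi fun _ : Fin K => μ) := by
      intro af₀
      have hmQ : ∀ aL, Measurable fun xf : Fin (n+2) → Fin K → X =>
          ENNReal.ofReal (smcQ γ q (n+2) K (extX (Nat.succ_pos (n+1)) xf)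
            (extA (T := n+2) (Fin.snoc af₀ aL))) := fun aL =>
        ENNReal.measurable_ofReal.comp
          (measurable_smcQ_ext hγ_meas hq_meas (by omega)
            (show n + 2 ≤ T by omega) (Nat.succ_pos (n+1)) _)
      have h3 : ∀ aL, ∫⁻ xf : Fin (n+2) → Fin K → X,
          ENNReal.ofReal (smcQ γ q (n+2) K (extX (Nat.succ_pos (n+1)) xf)
            (extA (T := n+2) (Fin.snoc af₀ aL)))
          ∂(Measure.pi fun _ : Fin (n+2) => Measure.pi fun _ : Fin K => μ)
        = ∫⁻ xf₀ : Fin (n+1) → Fin K → X, ∫⁻ y : Fin K → X,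
            ENNReal.ofReal (smcQ γ q (n+2) K (extX (Nat.succ_pos (n+1)) (Fin.snoc xf₀ y))
              (extA (T := n+2) (Fin.snoc af₀ aL)))
            ∂(Measure.pi fun _ : Fin K => μ)
            ∂(Measure.pi fun _ : Fin (n+1) => Measure.pi fun _ : Fin K => μ) := fun aL =>
        lintegral_snoc _ _ (hmQ aL)
      simp_rw [h3]
      have hj : ∀ aL : Fin K → Fin K,
          Measurable (fun p : ((Fin (n+1) → Fin K → X) × (Fin K → X)) =>
            ENNReal.ofReal (smcQ γ q (n+2) K
              (extX (Nat.succ_pos (n+1)) (Fin.snoc p.1 p.2))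
              (extA (T := n+2) (Fin.snoc af₀ aL)))) := fun aL =>
        (hmQ aL).comp measurable_snoc_pair
      rw [← lintegral_finset_sum _ (fun aL _ => (hj aL).lintegral_prod_right')]
      -- pointwise inner identity
      refine lintegral_congr fun xf₀ => ?_
      set τ := fun a : Fin K => traj (extX (Nat.succ_pos n) xf₀) (extA (T := n+1) af₀) (n+1) a
        with hτ
      have hτa : ∀ a : Fin K,
          traj (extX (Nat.succ_pos n) xf₀) (extA (T := n+1) af₀) (n+1) a = τ a := fun a => rfl
      have hΦ : ∀ (aL : Fin K → Fin K) (y : Fin K → X),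
          ENNReal.ofReal (smcQ γ q (n+2) K (extX (Nat.succ_pos (n+1)) (Fin.snoc xf₀ y))
              (extA (T := n+2) (Fin.snoc af₀ aL)))
            = ENNReal.ofReal (smcQ γ q (n+1) K (extX (Nat.succ_pos n) xf₀)
                (extA (T := n+1) af₀)) *
              ∏ k : Fin K, ENNReal.ofReal (q (n+2) (Fin.snoc (τ (aL k)) (y k))) *
                (We γ q (n+1) (τ (aL k)) / ∑ l, We γ q (n+1) (τ l)) := by
        intro aL y
        rw [ofReal_smcQ_succ hγ_pos hq_pos hK n hn2, smcQ_snoc]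
        congr 1
        refine Finset.prod_congr rfl fun k _ => ?_
        simp only [traj_snoc_top xf₀ af₀ y aL, extA_snoc_last af₀ aL,
          traj_snoc_lt xf₀ af₀ y aL (n+1) le_rfl, hτa]
      simp_rw [hΦ]
      have hmD : ∀ a : Fin K, Measurable fun z : X =>
          ENNReal.ofReal (q (n+2) (Fin.snoc (τ a) z)) *
            (We γ q (n+1) (τ a) / ∑ l, We γ q (n+1) (τ l)) := fun a =>
        (ENNReal.measurable_ofReal.comp ((hq_meas (n+2) (by omega) hn2).comp
          (measurable_snoc_point (τ a)))).mul_const _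
      have h4 : ∀ aL : Fin K → Fin K,
          ∫⁻ y : Fin K → X,
            ENNReal.ofReal (smcQ γ q (n+1) K (extX (Nat.succ_pos n) xf₀)
                (extA (T := n+1) af₀)) *
              ∏ k : Fin K, ENNReal.ofReal (q (n+2) (Fin.snoc (τ (aL k)) (y k))) *
                (We γ q (n+1) (τ (aL k)) / ∑ l, We γ q (n+1) (τ l))
            ∂(Measure.pi fun _ : Fin K => μ)
          = ENNReal.ofReal (smcQ γ q (n+1) K (extX (Nat.succ_pos n) xf₀)
                (extA (T := n+1) af₀)) *
              ∫⁻ y : Fin K → X,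
                ∏ k : Fin K, ENNReal.ofReal (q (n+2) (Fin.snoc (τ (aL k)) (y k))) *
                  (We γ q (n+1) (τ (aL k)) / ∑ l, We γ q (n+1) (τ l))
                ∂(Measure.pi fun _ : Fin K => μ) := fun aL =>
        lintegral_const_mul' _ _ ENNReal.ofReal_ne_top
      simp_rw [h4, ← Finset.mul_sum]
      have h5 : ∑ aL : Fin K → Fin K, ∫⁻ y : Fin K → X,
          ∏ k : Fin K, ENNReal.ofReal (q (n+2) (Fin.snoc (τ (aL k)) (y k))) *
            (We γ q (n+1) (τ (aL k)) / ∑ l, We γ q (n+1) (τ l))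
          ∂(Measure.pi fun _ : Fin K => μ) = 1 := by
        rw [sum_lintegral_prod μ _ (fun k a => hmD a)]
        exact Finset.prod_eq_one fun k _ =>
          sum_lintegral_D hγ_pos hq_pos hq_norm hK n hn2 τ
      rw [h5, mul_one]
    simp_rw [hstep]
    exact ih hn1

end SMCproof
end Sec8
section Sec9
open MeasureTheory Finset ENNReal
namespace SMCproof
set_option linter.unusedSectionVars false

variable {X : Type*} [MeasurableSpace X] {μ : Measure X} [SigmaFinite μ]
variable {T K : ℕ} {γ q : (t : ℕ) → (Fin t → X) → ℝ}
variable (hK : 0 < K)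
  (hγ_meas : ∀ t, 1 ≤ t → t ≤ T → Measurable (γ t))
  (hγ_pos : ∀ t, 1 ≤ t → t ≤ T → ∀ v : Fin t → X, 0 < γ t v)
  (hq_meas : ∀ t, 1 ≤ t → t ≤ T → Measurable (q t))
  (hq_pos : ∀ t, 1 ≤ t → t ≤ T → ∀ v : Fin t → X, 0 < q t v)
  (hq_norm : ∀ t < T, ∀ vp : Fin t → X, ∫ y, q (t + 1) (Fin.snoc vp y) ∂μ = 1)

include hK hγ_meas hγ_pos hq_meas hq_pos hq_norm

/-- Main SMC unbiasedness induction. -/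
lemma key : ∀ n : ℕ, n + 1 ≤ T → ∀ f : (Fin (n+1) → X) → ℝ≥0∞, Measurable f →
    ∑ af : Fin n → Fin K → Fin K,
      ∫⁻ xf : Fin (n+1) → Fin K → X,
        ENNReal.ofReal (smcQ γ q (n+1) K (extX (Nat.succ_pos n) xf) (extA (T := n+1) af)) *
          ENNReal.ofReal (smcZhat γ q n K (extX (Nat.succ_pos n) xf) (extA (T := n+1) af)) *
          ((K : ℝ≥0∞)⁻¹ * ∑ k : Fin K,
            We γ q (n+1) (traj (extX (Nat.succ_pos n) xf) (extA (T := n+1) af) (n+1) k) *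
              f (traj (extX (Nat.succ_pos n) xf) (extA (T := n+1) af) (n+1) k))
        ∂(Measure.pi fun _ : Fin (n+1) => Measure.pi fun _ : Fin K => μ)
    = ∫⁻ v, ENNReal.ofReal (γ (n+1) v) * f v ∂(Measure.pi fun _ : Fin (n+1) => μ) := by
  intro n
  induction n with
  | zero =>
    intro hn f hf
    rw [Fintype.sum_unique]
    set c : X → (Fin 1 → X) := fun w => fun _ : Fin 1 => w with hc
    have h1 : ∀ xf : Fin 1 → Fin K → X,
        ENNReal.ofReal (smcQ γ q 1 K (extX (Nat.succ_pos 0) xf)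
            (extA (T := 1) (default : Fin 0 → Fin K → Fin K))) *
          ENNReal.ofReal (smcZhat γ q 0 K (extX (Nat.succ_pos 0) xf)
            (extA (T := 1) (default : Fin 0 → Fin K → Fin K))) *
          ((K : ℝ≥0∞)⁻¹ * ∑ k : Fin K,
            We γ q 1 (traj (extX (Nat.succ_pos 0) xf)
                (extA (T := 1) (default : Fin 0 → Fin K → Fin K)) 1 k) *
              f (traj (extX (Nat.succ_pos 0) xf)
                (extA (T := 1) (default : Fin 0 → Fin K → Fin K)) 1 k))
        = (K : ℝ≥0∞)⁻¹ * ((∏ k : Fin K, ENNReal.ofReal (q 1 (c (xf ⟨0, Nat.succ_pos 0⟩ k)))) *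
            (∑ k : Fin K, We γ q 1 (c (xf ⟨0, Nat.succ_pos 0⟩ k)) *
              f (c (xf ⟨0, Nat.succ_pos 0⟩ k)))) := by
      intro xf
      rw [ofReal_smcQ_one hγ_pos hq_pos hn, ofReal_smcZhat_zero, mul_one]
      simp only [traj_ext_one (Nat.succ_pos 0) xf]
      ring
    simp_rw [h1]
    have hA : Measurable fun w : X => ENNReal.ofReal (q 1 (c w)) := by
      refine ENNReal.measurable_ofReal.comp ((hq_meas 1 le_rfl hn).comp ?_)
      exact measurable_pi_lambda _ fun _ => measurable_id
    have hB : Measurable fun w : X => We γ q 1 (c w) * f (c w) := by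
      have hcm : Measurable c := measurable_pi_lambda _ fun _ => measurable_id
      exact (ENNReal.measurable_ofReal.comp
        ((measurable_incW hγ_meas hq_meas 1 le_rfl hn).comp hcm)).mul (hf.comp hcm)
    have main : (∫⁻ xf : Fin 1 → Fin K → X,
        (K : ℝ≥0∞)⁻¹ * ((∏ k : Fin K, ENNReal.ofReal (q 1 (c (xf ⟨0, Nat.succ_pos 0⟩ k)))) *
          (∑ k : Fin K, We γ q 1 (c (xf ⟨0, Nat.succ_pos 0⟩ k)) *
            f (c (xf ⟨0, Nat.succ_pos 0⟩ k))))
        ∂(Measure.pi fun _ : Fin 1 => Measure.pi fun _ : Fin K => μ))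
        = ∫⁻ w : X, ENNReal.ofReal (γ 1 (c w)) * f (c w) ∂μ := by
      rw [lintegral_fin_one (Measure.pi fun _ : Fin K => μ)
        (fun xf : Fin 1 → Fin K → X =>
          (K : ℝ≥0∞)⁻¹ * ((∏ k : Fin K, ENNReal.ofReal (q 1 (c (xf ⟨0, Nat.succ_pos 0⟩ k)))) *
            (∑ k : Fin K, We γ q 1 (c (xf ⟨0, Nat.succ_pos 0⟩ k)) *
              f (c (xf ⟨0, Nat.succ_pos 0⟩ k)))))
        (by
          refine Measurable.const_mul (Measurable.mul ?_ ?_) _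
          · exact Finset.measurable_prod _ fun k _ => hA.comp
              ((measurable_pi_apply k).comp (measurable_pi_apply _))
          · exact Finset.measurable_sum _ fun k _ => hB.comp
              ((measurable_pi_apply k).comp (measurable_pi_apply _)))]
      have h2 : ∀ z : Fin K → X,
          (K : ℝ≥0∞)⁻¹ * ((∏ k : Fin K, ENNReal.ofReal (q 1 (c (z k)))) *
            (∑ k : Fin K, We γ q 1 (c (z k)) * f (c (z k))))
          = (K : ℝ≥0∞)⁻¹ * ∑ k0 : Fin K, ∏ k : Fin K,
              ENNReal.ofReal (q 1 (c (z k))) *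
                (if k = k0 then We γ q 1 (c (z k)) * f (c (z k)) else 1) := by
        intro z
        rw [prod_mul_sum_ite]
      simp_rw [h2]
      rw [lintegral_const_mul' _ _ (ENNReal.inv_ne_top.mpr (by exact_mod_cast hK.ne'))]
      rw [lintegral_finset_sum univ
        (f := fun (k0 : Fin K) (z : Fin K → X) => ∏ k : Fin K,
          ENNReal.ofReal (q 1 (c (z k))) *
            (if k = k0 then We γ q 1 (c (z k)) * f (c (z k)) else 1))
        (fun k0 _ => Finset.measurable_prod _ fun k _ =>
          ((hA.mul (Measurable.ite (MeasurableSet.const _) hB measurable_const)).comp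
            (measurable_pi_apply k)))]
      have h3 : ∀ k0 : Fin K,
          ∫⁻ z : Fin K → X, ∏ k : Fin K, ENNReal.ofReal (q 1 (c (z k))) *
              (if k = k0 then We γ q 1 (c (z k)) * f (c (z k)) else 1)
            ∂(Measure.pi fun _ : Fin K => μ)
          = ∫⁻ w : X, ENNReal.ofReal (γ 1 (c w)) * f (c w) ∂μ := by
        intro k0
        rw [lintegral_pi_prod μ
          (fun (k : Fin K) (w : X) => ENNReal.ofReal (q 1 (c w)) *
            (if k = k0 then We γ q 1 (c w) * f (c w) else 1))
          (fun k => hA.mul (Measurable.ite (MeasurableSet.const _) hB measurable_const))]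
        have h4 : ∀ k : Fin K, ∫⁻ w : X, ENNReal.ofReal (q 1 (c w)) *
            (if k = k0 then We γ q 1 (c w) * f (c w) else 1) ∂μ
            = if k = k0 then ∫⁻ w : X, ENNReal.ofReal (γ 1 (c w)) * f (c w) ∂μ else 1 := by
          intro k
          by_cases hk : k = k0
          · simp only [hk, if_pos]
            refine (lintegral_congr fun w => ?_)
            rw [← mul_assoc, q_mul_We_one hγ_pos hq_pos hn]
          · simp only [hk, if_neg, not_false_iff, mul_one]
            have h5 : ∀ w : X, ENNReal.ofReal (q 1 (c w))
                = ENNReal.ofReal (q 1 (Fin.snoc (Fin.elim0 : Fin 0 → X) w)) := by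
              intro w; rw [snoc_elim0]
            simp_rw [h5]
            exact lintegral_ofReal_q hq_pos hq_norm 0 hn Fin.elim0
        simp_rw [h4]
        rw [Finset.prod_ite_eq' univ k0
          (fun _ => ∫⁻ w : X, ENNReal.ofReal (γ 1 (c w)) * f (c w) ∂μ), if_pos (mem_univ k0)]
      simp_rw [h3, Finset.sum_const, card_univ, Fintype.card_fin, nsmul_eq_mul, ← mul_assoc]
      rw [ENNReal.inv_mul_cancel (by exact_mod_cast hK.ne') (ENNReal.natCast_ne_top K), one_mul]
    rw [main]
    rw [lintegral_fin_one μ (fun v => ENNReal.ofReal (γ 1 v) * f v)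
      ((ENNReal.measurable_ofReal.comp (hγ_meas 1 le_rfl hn)).mul hf)]
  | succ n ih =>
    intro hn2 f hf
    have hn1 : n + 1 ≤ T := by omega
    -- the marginalized test function
    set g : (Fin (n+1) → X) → ℝ≥0∞ := fun u =>
      ∫⁻ z, ENNReal.ofReal (γ (n+2) (Fin.snoc u z) / γ (n+1) u) * f (Fin.snoc u z) ∂μ with hg
    have hgm : Measurable g := by
      refine Measurable.lintegral_prod_right' (f := fun p : (Fin (n+1) → X) × X =>
        ENNReal.ofReal (γ (n+2) (Fin.snoc p.1 p.2) / γ (n+1) p.1) * f (Fin.snoc p.1 p.2)) ?_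
      refine Measurable.mul ?_ (hf.comp measurable_snoc_pair)
      refine ENNReal.measurable_ofReal.comp (Measurable.div ?_ ?_)
      · exact (hγ_meas (n+2) (by omega) hn2).comp measurable_snoc_pair
      · exact (hγ_meas (n+1) (by omega) hn1).comp measurable_fst
    rw [sum_snoc_eq]
    have hstep : ∀ af₀ : Fin n → Fin K → Fin K,
        ∑ aL : Fin K → Fin K,
          ∫⁻ xf : Fin (n+2) → Fin K → X,
            ENNReal.ofReal (smcQ γ q (n+2) K (extX (Nat.succ_pos (n+1)) xf)
                (extA (T := n+2) (Fin.snoc af₀ aL))) *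
              ENNReal.ofReal (smcZhat γ q (n+1) K (extX (Nat.succ_pos (n+1)) xf)
                (extA (T := n+2) (Fin.snoc af₀ aL))) *
              ((K : ℝ≥0∞)⁻¹ * ∑ k : Fin K,
                We γ q (n+2) (traj (extX (Nat.succ_pos (n+1)) xf)
                    (extA (T := n+2) (Fin.snoc af₀ aL)) (n+2) k) *
                  f (traj (extX (Nat.succ_pos (n+1)) xf)
                    (extA (T := n+2) (Fin.snoc af₀ aL)) (n+2) k))
            ∂(Measure.pi fun _ : Fin (n+2) => Measure.pi fun _ : Fin K => μ)
        = ∫⁻ xf₀ : Fin (n+1) → Fin K → X,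
            ENNReal.ofReal (smcQ γ q (n+1) K (extX (Nat.succ_pos n) xf₀)
                (extA (T := n+1) af₀)) *
              ENNReal.ofReal (smcZhat γ q n K (extX (Nat.succ_pos n) xf₀)
                (extA (T := n+1) af₀)) *
              ((K : ℝ≥0∞)⁻¹ * ∑ k : Fin K,
                We γ q (n+1) (traj (extX (Nat.succ_pos n) xf₀)
                    (extA (T := n+1) af₀) (n+1) k) *
                  g (traj (extX (Nat.succ_pos n) xf₀) (extA (T := n+1) af₀) (n+1) k))
            ∂(Measure.pi fun _ : Fin (n+1) => Measure.pi fun _ : Fin K => μ) := by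
      intro af₀
      have hmΦ : ∀ aL : Fin K → Fin K, Measurable (fun xf : Fin (n+2) → Fin K → X =>
          ENNReal.ofReal (smcQ γ q (n+2) K (extX (Nat.succ_pos (n+1)) xf)
              (extA (T := n+2) (Fin.snoc af₀ aL))) *
            ENNReal.ofReal (smcZhat γ q (n+1) K (extX (Nat.succ_pos (n+1)) xf)
              (extA (T := n+2) (Fin.snoc af₀ aL))) *
            ((K : ℝ≥0∞)⁻¹ * ∑ k : Fin K,
              We γ q (n+2) (traj (extX (Nat.succ_pos (n+1)) xf)
                  (extA (T := n+2) (Fin.snoc af₀ aL)) (n+2) k) *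
                f (traj (extX (Nat.succ_pos (n+1)) xf)
                  (extA (T := n+2) (Fin.snoc af₀ aL)) (n+2) k))) := by
        intro aL
        refine Measurable.fun_mul (Measurable.fun_mul ?_ ?_) (Measurable.const_mul ?_ _)
        · exact ENNReal.measurable_ofReal.comp
            (measurable_smcQ_ext hγ_meas hq_meas (by omega)
              (show n + 2 ≤ T by omega) (Nat.succ_pos (n+1)) _)
        · exact ENNReal.measurable_ofReal.comp
            (measurable_smcZhat_ext hγ_meas hq_meas
              (show n + 1 ≤ T by omega) (Nat.succ_pos (n+1)) _)
        · refine Finset.measurable_sum _ fun k _ => Measurable.mul ?_ ?_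
          · exact ENNReal.measurable_ofReal.comp
              ((measurable_incW hγ_meas hq_meas (n+2) (by omega) hn2).comp
                (measurable_traj_ext (Nat.succ_pos (n+1)) _ (n+2) k))
          · exact hf.comp (measurable_traj_ext (Nat.succ_pos (n+1)) _ (n+2) k)
      have h3 : ∀ aL : Fin K → Fin K,
          ∫⁻ xf : Fin (n+2) → Fin K → X,
            ENNReal.ofReal (smcQ γ q (n+2) K (extX (Nat.succ_pos (n+1)) xf)
                (extA (T := n+2) (Fin.snoc af₀ aL))) *
              ENNReal.ofReal (smcZhat γ q (n+1) K (extX (Nat.succ_pos (n+1)) xf)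
                (extA (T := n+2) (Fin.snoc af₀ aL))) *
              ((K : ℝ≥0∞)⁻¹ * ∑ k : Fin K,
                We γ q (n+2) (traj (extX (Nat.succ_pos (n+1)) xf)
                    (extA (T := n+2) (Fin.snoc af₀ aL)) (n+2) k) *
                  f (traj (extX (Nat.succ_pos (n+1)) xf)
                    (extA (T := n+2) (Fin.snoc af₀ aL)) (n+2) k))
            ∂(Measure.pi fun _ : Fin (n+2) => Measure.pi fun _ : Fin K => μ)
          = ∫⁻ xf₀ : Fin (n+1) → Fin K → X, ∫⁻ y : Fin K → X,
              ENNReal.ofReal (smcQ γ q (n+2) K (extX (Nat.succ_pos (n+1)) (Fin.snoc xf₀ y))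
                  (extA (T := n+2) (Fin.snoc af₀ aL))) *
                ENNReal.ofReal (smcZhat γ q (n+1) K
                  (extX (Nat.succ_pos (n+1)) (Fin.snoc xf₀ y))
                  (extA (T := n+2) (Fin.snoc af₀ aL))) *
                ((K : ℝ≥0∞)⁻¹ * ∑ k : Fin K,
                  We γ q (n+2) (traj (extX (Nat.succ_pos (n+1)) (Fin.snoc xf₀ y))
                      (extA (T := n+2) (Fin.snoc af₀ aL)) (n+2) k) *
                    f (traj (extX (Nat.succ_pos (n+1)) (Fin.snoc xf₀ y))
                      (extA (T := n+2) (Fin.snoc af₀ aL)) (n+2) k))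
              ∂(Measure.pi fun _ : Fin K => μ)
              ∂(Measure.pi fun _ : Fin (n+1) => Measure.pi fun _ : Fin K => μ) := fun aL =>
        lintegral_snoc _ _ (hmΦ aL)
      simp_rw [h3]
      have hj : ∀ aL : Fin K → Fin K,
          Measurable (fun p : ((Fin (n+1) → Fin K → X) × (Fin K → X)) =>
            ENNReal.ofReal (smcQ γ q (n+2) K (extX (Nat.succ_pos (n+1)) (Fin.snoc p.1 p.2))
                (extA (T := n+2) (Fin.snoc af₀ aL))) *
              ENNReal.ofReal (smcZhat γ q (n+1) K
                (extX (Nat.succ_pos (n+1)) (Fin.snoc p.1 p.2))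
                (extA (T := n+2) (Fin.snoc af₀ aL))) *
              ((K : ℝ≥0∞)⁻¹ * ∑ k : Fin K,
                We γ q (n+2) (traj (extX (Nat.succ_pos (n+1)) (Fin.snoc p.1 p.2))
                    (extA (T := n+2) (Fin.snoc af₀ aL)) (n+2) k) *
                  f (traj (extX (Nat.succ_pos (n+1)) (Fin.snoc p.1 p.2))
                    (extA (T := n+2) (Fin.snoc af₀ aL)) (n+2) k))) := fun aL =>
        (hmΦ aL).comp measurable_snoc_pair
      rw [← lintegral_finset_sum _ (fun aL _ => (hj aL).lintegral_prod_right')]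
      refine lintegral_congr fun xf₀ => ?_
      set τ := fun a : Fin K => traj (extX (Nat.succ_pos n) xf₀) (extA (T := n+1) af₀) (n+1) a
        with hτ
      have hτa : ∀ a : Fin K,
          traj (extX (Nat.succ_pos n) xf₀) (extA (T := n+1) af₀) (n+1) a = τ a := fun a => rfl
      set S := ∑ l : Fin K, We γ q (n+1) (τ l) with hS
      have hS0 : S ≠ 0 := (sumWeE_pos hγ_pos hq_pos hK (n+1) (by omega) hn1 τ).ne'
      have hST : S ≠ ⊤ := sumWeE_ne_top (n+1) τ
      have hΦ : ∀ (aL : Fin K → Fin K) (y : Fin K → X),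
          ENNReal.ofReal (smcQ γ q (n+2) K (extX (Nat.succ_pos (n+1)) (Fin.snoc xf₀ y))
              (extA (T := n+2) (Fin.snoc af₀ aL))) *
            ENNReal.ofReal (smcZhat γ q (n+1) K
              (extX (Nat.succ_pos (n+1)) (Fin.snoc xf₀ y))
              (extA (T := n+2) (Fin.snoc af₀ aL))) *
            ((K : ℝ≥0∞)⁻¹ * ∑ k : Fin K,
              We γ q (n+2) (traj (extX (Nat.succ_pos (n+1)) (Fin.snoc xf₀ y))
                  (extA (T := n+2) (Fin.snoc af₀ aL)) (n+2) k) *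
                f (traj (extX (Nat.succ_pos (n+1)) (Fin.snoc xf₀ y))
                  (extA (T := n+2) (Fin.snoc af₀ aL)) (n+2) k))
          = (ENNReal.ofReal (smcQ γ q (n+1) K (extX (Nat.succ_pos n) xf₀)
                (extA (T := n+1) af₀)) *
              ENNReal.ofReal (smcZhat γ q n K (extX (Nat.succ_pos n) xf₀)
                (extA (T := n+1) af₀)) *
              (((K : ℝ≥0∞)⁻¹ * S) * (K : ℝ≥0∞)⁻¹)) *
            ((∏ k : Fin K, ENNReal.ofReal (q (n+2) (Fin.snoc (τ (aL k)) (y k))) *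
                (We γ q (n+1) (τ (aL k)) / S)) *
              (∑ k : Fin K, We γ q (n+2) (Fin.snoc (τ (aL k)) (y k)) *
                f (Fin.snoc (τ (aL k)) (y k)))) := by
        intro aL y
        rw [ofReal_smcQ_succ hγ_pos hq_pos hK n hn2, smcQ_snoc,
          ofReal_smcZhat_succ hγ_pos hq_pos hK n hn1, smcZhat_snoc (by omega)]
        simp only [traj_snoc_top xf₀ af₀ y aL, extA_snoc_last af₀ aL,
          traj_snoc_lt xf₀ af₀ y aL (n+1) le_rfl, hτa, ← hS]
        ring
      simp_rw [hΦ, prod_mul_sum_ite]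
      have hmD : ∀ a : Fin K, Measurable fun z : X =>
          ENNReal.ofReal (q (n+2) (Fin.snoc (τ a) z)) * (We γ q (n+1) (τ a) / S) := fun a =>
        (ENNReal.measurable_ofReal.comp ((hq_meas (n+2) (by omega) hn2).comp
          (measurable_snoc_point (τ a)))).mul_const _
      have hmE : ∀ a : Fin K, Measurable fun z : X =>
          We γ q (n+2) (Fin.snoc (τ a) z) * f (Fin.snoc (τ a) z) := fun a =>
        (ENNReal.measurable_ofReal.comp
          ((measurable_incW hγ_meas hq_meas (n+2) (by omega) hn2).comp
            (measurable_snoc_point (τ a)))).mul (hf.comp (measurable_snoc_point (τ a)))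
      have hCtop : (ENNReal.ofReal (smcQ γ q (n+1) K (extX (Nat.succ_pos n) xf₀)
            (extA (T := n+1) af₀)) *
          ENNReal.ofReal (smcZhat γ q n K (extX (Nat.succ_pos n) xf₀)
            (extA (T := n+1) af₀)) *
          (((K : ℝ≥0∞)⁻¹ * S) * (K : ℝ≥0∞)⁻¹)) ≠ ⊤ := by
        refine ENNReal.mul_ne_top (ENNReal.mul_ne_top ENNReal.ofReal_ne_top
          ENNReal.ofReal_ne_top) (ENNReal.mul_ne_top (ENNReal.mul_ne_top ?_ hST) ?_) <;>
          exact ENNReal.inv_ne_top.mpr (by exact_mod_cast hK.ne')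
      have h4 : ∀ aL : Fin K → Fin K,
          ∫⁻ y : Fin K → X,
            (ENNReal.ofReal (smcQ γ q (n+1) K (extX (Nat.succ_pos n) xf₀)
                (extA (T := n+1) af₀)) *
              ENNReal.ofReal (smcZhat γ q n K (extX (Nat.succ_pos n) xf₀)
                (extA (T := n+1) af₀)) *
              (((K : ℝ≥0∞)⁻¹ * S) * (K : ℝ≥0∞)⁻¹)) *
              (∑ k0 : Fin K, ∏ k : Fin K,
                ENNReal.ofReal (q (n+2) (Fin.snoc (τ (aL k)) (y k))) *
                    (We γ q (n+1) (τ (aL k)) / S) *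
                  (if k = k0 then We γ q (n+2) (Fin.snoc (τ (aL k)) (y k)) *
                    f (Fin.snoc (τ (aL k)) (y k)) else 1))
            ∂(Measure.pi fun _ : Fin K => μ)
          = (ENNReal.ofReal (smcQ γ q (n+1) K (extX (Nat.succ_pos n) xf₀)
                (extA (T := n+1) af₀)) *
              ENNReal.ofReal (smcZhat γ q n K (extX (Nat.succ_pos n) xf₀)
                (extA (T := n+1) af₀)) *
              (((K : ℝ≥0∞)⁻¹ * S) * (K : ℝ≥0∞)⁻¹)) *
              ∑ k0 : Fin K, ∫⁻ y : Fin K → X, ∏ k : Fin K,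
                ENNReal.ofReal (q (n+2) (Fin.snoc (τ (aL k)) (y k))) *
                    (We γ q (n+1) (τ (aL k)) / S) *
                  (if k = k0 then We γ q (n+2) (Fin.snoc (τ (aL k)) (y k)) *
                    f (Fin.snoc (τ (aL k)) (y k)) else 1)
                ∂(Measure.pi fun _ : Fin K => μ) := by
        intro aL
        rw [lintegral_const_mul' _ _ hCtop, lintegral_finset_sum univ
          (f := fun (k0 : Fin K) (y : Fin K → X) => ∏ k : Fin K,
            ENNReal.ofReal (q (n+2) (Fin.snoc (τ (aL k)) (y k))) *
                (We γ q (n+1) (τ (aL k)) / S) *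
              (if k = k0 then We γ q (n+2) (Fin.snoc (τ (aL k)) (y k)) *
                f (Fin.snoc (τ (aL k)) (y k)) else 1))
          (fun k0 _ => Finset.measurable_prod _ fun k _ =>
            (((hmD (aL k)).mul (Measurable.ite (MeasurableSet.const _) (hmE (aL k))
              measurable_const)).comp (measurable_pi_apply k)))]
      simp_rw [h4, ← Finset.mul_sum]
      rw [Finset.sum_comm]
      have h5 : ∀ k0 : Fin K,
          ∑ aL : Fin K → Fin K, ∫⁻ y : Fin K → X, ∏ k : Fin K,
            ENNReal.ofReal (q (n+2) (Fin.snoc (τ (aL k)) (y k))) *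
                (We γ q (n+1) (τ (aL k)) / S) *
              (if k = k0 then We γ q (n+2) (Fin.snoc (τ (aL k)) (y k)) *
                f (Fin.snoc (τ (aL k)) (y k)) else 1)
            ∂(Measure.pi fun _ : Fin K => μ)
          = (∑ a : Fin K, We γ q (n+1) (τ a) * g (τ a)) / S := by
        intro k0
        rw [sum_lintegral_prod μ
          (F := fun (k : Fin K) (a : Fin K) (z : X) =>
            ENNReal.ofReal (q (n+2) (Fin.snoc (τ a) z)) * (We γ q (n+1) (τ a) / S) *
              (if k = k0 then We γ q (n+2) (Fin.snoc (τ a) z) * f (Fin.snoc (τ a) z) else 1))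
          (fun k a => (hmD a).mul
            (Measurable.ite (MeasurableSet.const _) (hmE a) measurable_const))]
        have h6 : ∀ k : Fin K,
            (∑ a : Fin K, ∫⁻ z : X,
              ENNReal.ofReal (q (n+2) (Fin.snoc (τ a) z)) * (We γ q (n+1) (τ a) / S) *
                (if k = k0 then We γ q (n+2) (Fin.snoc (τ a) z) * f (Fin.snoc (τ a) z) else 1)
              ∂μ)
            = if k = k0 then (∑ a : Fin K, We γ q (n+1) (τ a) * g (τ a)) / S else 1 := by
          intro k
          by_cases hk : k = k0
          · simp only [hk, if_pos]
            rw [hS]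
            rw [sum_lintegral_DE hγ_pos hq_pos hK n hn2 τ f hf]
          · simp only [hk, if_neg, not_false_iff, mul_one]
            rw [hS]
            exact sum_lintegral_D hγ_pos hq_pos hq_norm hK n hn2 τ
        simp_rw [h6]
        rw [Finset.prod_ite_eq' univ k0
          (fun _ => (∑ a : Fin K, We γ q (n+1) (τ a) * g (τ a)) / S), if_pos (mem_univ k0)]
      simp_rw [h5]
      rw [Finset.sum_const, card_univ, Fintype.card_fin, nsmul_eq_mul]
      have hK1 : (K : ℝ≥0∞)⁻¹ * (K : ℝ≥0∞) = 1 :=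
        ENNReal.inv_mul_cancel (by exact_mod_cast hK.ne') (ENNReal.natCast_ne_top K)
      have hSW : S * ((∑ a : Fin K, We γ q (n+1) (τ a) * g (τ a)) / S)
          = ∑ a : Fin K, We γ q (n+1) (τ a) * g (τ a) :=
        ENNReal.mul_div_cancel hS0 hST
      calc (ENNReal.ofReal (smcQ γ q (n+1) K (extX (Nat.succ_pos n) xf₀)
              (extA (T := n+1) af₀)) *
            ENNReal.ofReal (smcZhat γ q n K (extX (Nat.succ_pos n) xf₀)
              (extA (T := n+1) af₀)) *
            (((K : ℝ≥0∞)⁻¹ * S) * (K : ℝ≥0∞)⁻¹)) *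
            ((K : ℝ≥0∞) * ((∑ a : Fin K, We γ q (n+1) (τ a) * g (τ a)) / S))
          = ENNReal.ofReal (smcQ γ q (n+1) K (extX (Nat.succ_pos n) xf₀)
              (extA (T := n+1) af₀)) *
            ENNReal.ofReal (smcZhat γ q n K (extX (Nat.succ_pos n) xf₀)
              (extA (T := n+1) af₀)) *
            ((K : ℝ≥0∞)⁻¹ * (((K : ℝ≥0∞)⁻¹ * (K : ℝ≥0∞)) *
              (S * ((∑ a : Fin K, We γ q (n+1) (τ a) * g (τ a)) / S)))) := by ring
        _ = _ := by rw [hK1, hSW, one_mul]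
    simp_rw [hstep]
    rw [ih hn1 g hgm]
    -- final marginalization step
    rw [lintegral_snoc μ (fun v => ENNReal.ofReal (γ (n+2) v) * f v)
      ((ENNReal.measurable_ofReal.comp (hγ_meas (n+2) (by omega) hn2)).mul hf)]
    refine lintegral_congr fun u => ?_
    rw [hg]
    rw [← lintegral_const_mul' _ _ ENNReal.ofReal_ne_top]
    refine lintegral_congr fun z => ?_
    rw [← mul_assoc, ← ENNReal.ofReal_mul (hγ_pos (n+1) (by omega) hn1 u).le,
      mul_div_cancel₀ _ (hγ_pos (n+1) (by omega) hn1 u).ne']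

end SMCproof
end Sec9

open scoped ENNReal

/-- **KL decomposition of the SMC evidence lower bound.**
Fix `T ≥ 1`, `K ≥ 1`, strictly positive unnormalized targets `γ_1, …, γ_T` with
normalizing constants `Z_1, …, Z_T ∈ (0, ∞)`, and strictly positive normalized proposals
`q_1, …, q_T`.  Assume `Q_SMC · log Ẑ_SMC` is integrable with respect to
`μ^{⊗TK} ⊗ (counting measure on ancestor configurations)`.  Then
`P_SMC = Q_SMC · Ẑ_SMC / Z_T` is a probability density on the extended space, and
`ELBO_SMC = ∑_a ∫ Q_SMC log Ẑ_SMC dμ^{⊗TK} = log Z_T - KL(Q_SMC ‖ P_SMC)`. -/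
theorem elbo_smc_eq_log_marginal_likelihood_sub_KL
    {X : Type*} [MeasurableSpace X] (μ : Measure X) [SigmaFinite μ]
    (T K : ℕ) (hT : 1 ≤ T) (hK : 1 ≤ K)
    (γ q : (t : ℕ) → (Fin t → X) → ℝ) (Z : ℕ → ℝ)
    (hγ_meas : ∀ t, 1 ≤ t → t ≤ T → Measurable (γ t))
    (hγ_pos : ∀ t, 1 ≤ t → t ≤ T → ∀ v, 0 < γ t v)
    (hγ_int : ∀ t, 1 ≤ t → t ≤ T → Integrable (γ t) (Measure.pi fun _ : Fin t => μ))
    (hZ_def : ∀ t, 1 ≤ t → t ≤ T →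
      ∫ v, γ t v ∂(Measure.pi fun _ : Fin t => μ) = Z t)
    (hZ_pos : ∀ t, 1 ≤ t → t ≤ T → 0 < Z t)
    (hq_meas : ∀ t, 1 ≤ t → t ≤ T → Measurable (q t))
    (hq_pos : ∀ t, 1 ≤ t → t ≤ T → ∀ v, 0 < q t v)
    (hq_norm : ∀ t < T, ∀ vp : Fin t → X, ∫ y, q (t + 1) (Fin.snoc vp y) ∂μ = 1)
    (hint : ∀ af : Fin (T - 1) → Fin K → Fin K,
      Integrable
        (fun xf : Fin T → Fin K → X =>
          smcQ γ q T K (extX hT xf) (extA af) *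
            Real.log (smcZhat γ q T K (extX hT xf) (extA af)))
        (Measure.pi fun _ : Fin T => Measure.pi fun _ : Fin K => μ)) :
    (∑ af : Fin (T - 1) → Fin K → Fin K,
        ∫ xf : Fin T → Fin K → X,
          smcQ γ q T K (extX hT xf) (extA af) * smcZhat γ q T K (extX hT xf) (extA af) / Z T
          ∂(Measure.pi fun _ : Fin T => Measure.pi fun _ : Fin K => μ)
        = 1) ∧
      (∑ af : Fin (T - 1) → Fin K → Fin K,
          ∫ xf : Fin T → Fin K → X,
            smcQ γ q T K (extX hT xf) (extA af) *
              Real.log (smcZhat γ q T K (extX hT xf) (extA af))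
            ∂(Measure.pi fun _ : Fin T => Measure.pi fun _ : Fin K => μ)
        = Real.log (Z T)
          - ∑ af : Fin (T - 1) → Fin K → Fin K,
              ∫ xf : Fin T → Fin K → X,
                smcQ γ q T K (extX hT xf) (extA af) *
                  Real.log (smcQ γ q T K (extX hT xf) (extA af) /
                    (smcQ γ q T K (extX hT xf) (extA af) *
                      smcZhat γ q T K (extX hT xf) (extA af) / Z T))
                ∂(Measure.pi fun _ : Fin T => Measure.pi fun _ : Fin K => μ)) := by
  classical
  obtain ⟨n, rfl⟩ : ∃ n, T = n + 1 := ⟨T - 1, by omega⟩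
  set π : Measure (Fin (n+1) → Fin K → X) :=
    Measure.pi fun _ : Fin (n+1) => Measure.pi fun _ : Fin K => μ with hπ
  -- abbreviations
  set QR : (Fin n → Fin K → Fin K) → (Fin (n+1) → Fin K → X) → ℝ := fun af xf =>
    smcQ γ q (n+1) K (extX hT xf) (extA (T := n+1) af) with hQR
  set ZR : (Fin n → Fin K → Fin K) → (Fin (n+1) → Fin K → X) → ℝ := fun af xf =>
    smcZhat γ q (n+1) K (extX hT xf) (extA (T := n+1) af) with hZR
  have hK0 : 0 < K := hK
  have hZpos : 0 < Z (n+1) := hZ_pos (n+1) (by omega) le_rfl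
  have hQpos : ∀ af xf, 0 < QR af xf := fun af xf =>
    SMCproof.smcQ_pos hγ_pos hq_pos hK0 hT le_rfl _ _
  have hZhpos : ∀ af xf, 0 < ZR af xf := fun af xf =>
    SMCproof.smcZhat_pos hγ_pos hq_pos hK0 le_rfl _ _
  have hmQR : ∀ af, Measurable (QR af) := fun af =>
    SMCproof.measurable_smcQ_ext hγ_meas hq_meas hT le_rfl hT _
  have hmZR : ∀ af, Measurable (ZR af) := fun af =>
    SMCproof.measurable_smcZhat_ext hγ_meas hq_meas le_rfl hT _
  -- ENNReal-level facts
  have hkey2 : ∑ af : Fin n → Fin K → Fin K,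
      ∫⁻ xf, ENNReal.ofReal (QR af xf) ∂π = 1 :=
    SMCproof.key2 hK0 hγ_meas hγ_pos hq_meas hq_pos hq_norm n le_rfl
  have hkey1 : ∑ af : Fin n → Fin K → Fin K,
      ∫⁻ xf, ENNReal.ofReal (QR af xf * ZR af xf) ∂π = ENNReal.ofReal (Z (n+1)) := by
    have hptw : ∀ (af : Fin n → Fin K → Fin K) (xf : Fin (n+1) → Fin K → X),
        ENNReal.ofReal (QR af xf * ZR af xf)
          = ENNReal.ofReal (smcQ γ q (n+1) K (extX (Nat.succ_pos n) xf)
                (extA (T := n+1) af)) *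
              ENNReal.ofReal (smcZhat γ q n K (extX (Nat.succ_pos n) xf)
                (extA (T := n+1) af)) *
              ((K : ℝ≥0∞)⁻¹ * ∑ k : Fin K,
                SMCproof.We γ q (n+1) (traj (extX (Nat.succ_pos n) xf)
                    (extA (T := n+1) af) (n+1) k) *
                  (fun _ : Fin (n+1) → X => (1 : ℝ≥0∞))
                    (traj (extX (Nat.succ_pos n) xf) (extA (T := n+1) af) (n+1) k)) := by
      intro af xf
      rw [ENNReal.ofReal_mul (hQpos af xf).le,
        SMCproof.ofReal_smcZhat_succ hγ_pos hq_pos hK0 n le_rfl, ← mul_assoc]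
      simp only [mul_one]
      rfl
    simp_rw [hptw]
    rw [SMCproof.key hK0 hγ_meas hγ_pos hq_meas hq_pos hq_norm n le_rfl _ measurable_const]
    simp only [mul_one]
    rw [← MeasureTheory.ofReal_integral_eq_lintegral_ofReal
      (hγ_int (n+1) (by omega) le_rfl)
      (ae_of_all _ fun v => (hγ_pos (n+1) (by omega) le_rfl v).le),
      hZ_def (n+1) (by omega) le_rfl]
  -- integrability and real sums
  have hQlt : ∀ af : Fin n → Fin K → Fin K, ∫⁻ xf, ENNReal.ofReal (QR af xf) ∂π ≠ ⊤ := by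
    intro af
    refine ne_top_of_le_ne_top (by simp : (1 : ℝ≥0∞) ≠ ⊤) ?_
    rw [← hkey2]
    exact Finset.single_le_sum (f := fun af => ∫⁻ xf, ENNReal.ofReal (QR af xf) ∂π)
      (fun _ _ => zero_le) (mem_univ af)
  have hQZlt : ∀ af : Fin n → Fin K → Fin K,
      ∫⁻ xf, ENNReal.ofReal (QR af xf * ZR af xf) ∂π ≠ ⊤ := by
    intro af
    refine ne_top_of_le_ne_top (ENNReal.ofReal_ne_top (r := Z (n+1))) ?_
    rw [← hkey1]
    exact Finset.single_le_sum
      (f := fun af => ∫⁻ xf, ENNReal.ofReal (QR af xf * ZR af xf) ∂π)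
      (fun _ _ => zero_le) (mem_univ af)
  have hQint : ∀ af, Integrable (QR af) π := by
    intro af
    refine ⟨(hmQR af).aestronglyMeasurable, ?_⟩
    rw [hasFiniteIntegral_iff_norm]
    have : ∀ xf, ENNReal.ofReal ‖QR af xf‖ = ENNReal.ofReal (QR af xf) := fun xf => by
      rw [Real.norm_eq_abs, abs_of_pos (hQpos af xf)]
    simp_rw [this]
    exact (hQlt af).lt_top
  have hQZint : ∀ af, Integrable (fun xf => QR af xf * ZR af xf) π := by
    intro af
    refine ⟨((hmQR af).mul (hmZR af)).aestronglyMeasurable, ?_⟩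
    rw [hasFiniteIntegral_iff_norm]
    have : ∀ xf, ENNReal.ofReal ‖QR af xf * ZR af xf‖
        = ENNReal.ofReal (QR af xf * ZR af xf) := fun xf => by
      rw [Real.norm_eq_abs, abs_of_pos (mul_pos (hQpos af xf) (hZhpos af xf))]
    simp_rw [this]
    exact (hQZlt af).lt_top
  have hsumB : ∑ af : Fin n → Fin K → Fin K, ∫ xf, QR af xf ∂π = 1 := by
    have h1 : ∀ af : Fin n → Fin K → Fin K, ∫ xf, QR af xf ∂π
        = (∫⁻ xf, ENNReal.ofReal (QR af xf) ∂π).toReal := fun af =>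
      integral_eq_lintegral_of_nonneg_ae (ae_of_all _ fun xf => (hQpos af xf).le)
        (hmQR af).aestronglyMeasurable
    simp_rw [h1]
    rw [← ENNReal.toReal_sum (fun af _ => hQlt af), hkey2, ENNReal.toReal_one]
  have hsumA : ∑ af : Fin n → Fin K → Fin K, ∫ xf, QR af xf * ZR af xf ∂π = Z (n+1) := by
    have h1 : ∀ af : Fin n → Fin K → Fin K, ∫ xf, QR af xf * ZR af xf ∂π
        = (∫⁻ xf, ENNReal.ofReal (QR af xf * ZR af xf) ∂π).toReal := fun af =>
      integral_eq_lintegral_of_nonneg_ae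
        (ae_of_all _ fun xf => (mul_pos (hQpos af xf) (hZhpos af xf)).le)
        ((hmQR af).mul (hmZR af)).aestronglyMeasurable
    simp_rw [h1]
    rw [← ENNReal.toReal_sum (fun af _ => hQZlt af), hkey1,
      ENNReal.toReal_ofReal hZpos.le]
  -- part 1
  have hpart1 : ∑ af : Fin n → Fin K → Fin K,
      ∫ xf, QR af xf * ZR af xf / Z (n+1) ∂π = 1 := by
    have h1 : ∀ af : Fin n → Fin K → Fin K, ∫ xf, QR af xf * ZR af xf / Z (n+1) ∂π
        = (∫ xf, QR af xf * ZR af xf ∂π) / Z (n+1) := fun af =>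
      integral_div _ _
    simp_rw [h1]
    rw [← Finset.sum_div, hsumA, div_self hZpos.ne']
  -- part 2
  have hpart2 : ∑ af : Fin n → Fin K → Fin K,
      ∫ xf, QR af xf * Real.log (ZR af xf) ∂π
      = Real.log (Z (n+1))
        - ∑ af : Fin n → Fin K → Fin K,
            ∫ xf, QR af xf *
              Real.log (QR af xf / (QR af xf * ZR af xf / Z (n+1))) ∂π := by
    have hptw : ∀ (af : Fin n → Fin K → Fin K) (xf : Fin (n+1) → Fin K → X),
        QR af xf * Real.log (QR af xf / (QR af xf * ZR af xf / Z (n+1)))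
          = QR af xf * Real.log (Z (n+1)) - QR af xf * Real.log (ZR af xf) := by
      intro af xf
      have h2 : QR af xf / (QR af xf * ZR af xf / Z (n+1)) = Z (n+1) / ZR af xf := by
        have hh1 : QR af xf ≠ 0 := (hQpos af xf).ne'
        have hh2 : ZR af xf ≠ 0 := (hZhpos af xf).ne'
        have hh3 : Z (n+1) ≠ 0 := hZpos.ne'
        field_simp
      rw [h2, Real.log_div hZpos.ne' (hZhpos af xf).ne', mul_sub]
    have h3 : ∀ af : Fin n → Fin K → Fin K,
        ∫ xf, QR af xf * Real.log (QR af xf / (QR af xf * ZR af xf / Z (n+1))) ∂π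
          = (∫ xf, QR af xf ∂π) * Real.log (Z (n+1))
            - ∫ xf, QR af xf * Real.log (ZR af xf) ∂π := by
      intro af
      simp_rw [hptw af]
      rw [integral_sub ((hQint af).mul_const _) (hint af), integral_mul_const]
    simp_rw [h3]
    rw [Finset.sum_sub_distrib, ← Finset.sum_mul, hsumB, one_mul]
    ring
  exact ⟨hpart1, hpart2⟩
end
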